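/- arXiv:1003.4447 — 14 statements merged into one kernel-verified Lean document; each statement's English description precedes it below -/
import Mathlib

section
/- Let G be a finite simple graph and let π = (W_1, …, W_t) be a clique vertex-partition of G. Then every maximal independent set of the clique-whiskered graph G^π has cardinality exactly t; in particular, the independence complex Ind(G^π) is pure of dimension t − 1. -/
/-- A finset of vertices is an independent set of the graph `G`. -/
def IsIndep {V : Type*} (G : SimpleGraph V) (s : Finset V) : Prop :=
  ∀ u ∈ s, ∀ v ∈ s, ¬ G.Adj u v

/-- A clique vertex-partition of `G`: a family of `t` pairwise disjoint (possibly empty)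
cliques of `G` whose union is the whole vertex set. -/
structure CliquePartition {V : Type*} (G : SimpleGraph V) (t : ℕ) where
  part : Fin t → Finset V
  disj : ∀ i j, i ≠ j → Disjoint (part i) (part j)
  cover : ∀ v, ∃ i, v ∈ part i
  clique : ∀ i, G.IsClique (part i : Set V)

/-- The clique-whiskered graph `G^π`: to each clique `W_i` of the partition a new vertex
`w_i` (encoded as `Sum.inr i`) is attached, joined to every vertex of `W_i`. -/
def whisker {V : Type*} {t : ℕ} (G : SimpleGraph V) (π : CliquePartition G t) :
    SimpleGraph (V ⊕ Fin t) :=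
  SimpleGraph.fromRel fun a b =>
    match a, b with
    | Sum.inl u, Sum.inl v => G.Adj u v
    | Sum.inl v, Sum.inr i => v ∈ π.part i
    | _, _ => False

lemma whisker_adj_ll {V : Type*} {t : ℕ} (G : SimpleGraph V) (π : CliquePartition G t)
    (u v : V) : (whisker G π).Adj (Sum.inl u) (Sum.inl v) ↔ G.Adj u v := by
  simp only [whisker, SimpleGraph.fromRel_adj]
  constructor
  · rintro ⟨h, h' | h'⟩
    · exact h'
    · exact h'.symm
  · intro h
    exact ⟨by simp [G.ne_of_adj h], Or.inl h⟩

lemma whisker_adj_lr {V : Type*} {t : ℕ} (G : SimpleGraph V) (π : CliquePartition G t)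
    (v : V) (i : Fin t) : (whisker G π).Adj (Sum.inl v) (Sum.inr i) ↔ v ∈ π.part i := by
  simp [whisker, SimpleGraph.fromRel_adj]

lemma whisker_not_adj_rr {V : Type*} {t : ℕ} (G : SimpleGraph V) (π : CliquePartition G t)
    (i j : Fin t) : ¬ (whisker G π).Adj (Sum.inr i) (Sum.inr j) := by
  simp [whisker, SimpleGraph.fromRel_adj]

/-- Every maximal independent set of the clique-whiskered graph `G^π` has cardinality
exactly `t`; in particular `Ind(G^π)` is pure of dimension `t - 1`. -/
theorem maximal_indep_card_of_whisker {V : Type*} [Fintype V] (G : SimpleGraph V) {t : ℕ}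
    (π : CliquePartition G t) (s : Finset (V ⊕ Fin t))
    (hs : IsIndep (whisker G π) s)
    (hmax : ∀ s', IsIndep (whisker G π) s' → s ⊆ s' → s = s') :
    s.card = t := by
  classical
  set f : V ⊕ Fin t → Fin t := fun a => match a with
    | Sum.inl v => Classical.choose (π.cover v)
    | Sum.inr i => i with hf
  have hmem : ∀ v : V, v ∈ π.part (f (Sum.inl v)) := fun v =>
    Classical.choose_spec (π.cover v)
  have huniq : ∀ (v : V) (i : Fin t), v ∈ π.part i → f (Sum.inl v) = i := by
    intro v i hv
    by_contra hne
    simpa using (π.disj _ _ hne).le_bot (Finset.mem_inter.2 ⟨hmem v, hv⟩)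
  -- injectivity on s
  have hinj : ∀ a ∈ s, ∀ b ∈ s, f a = f b → a = b := by
    rintro (u | i) ha (v | j) hb hab
    · by_contra hne
      have huv : u ≠ v := fun h => hne (by rw [h])
      have hadj : G.Adj u v := by
        have := π.clique (f (Sum.inl u))
        exact this (by exact_mod_cast hmem u)
          (by rw [hab] at *; exact_mod_cast hmem v) huv
      exact hs _ ha _ hb ((whisker_adj_ll G π u v).2 hadj)
    · exfalso
      have : u ∈ π.part j := by
        have h2 : f (Sum.inl u) = j := hab
        rw [← h2]; exact hmem u
      exact hs _ ha _ hb ((whisker_adj_lr G π u j).2 this)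
    · exfalso
      have : v ∈ π.part i := by
        have : f (Sum.inl v) = i := hab.symm
        rw [← this]; exact hmem v
      exact hs _ hb _ ha ((whisker_adj_lr G π v i).2 this)
    · simp only [hf] at hab; rw [hab]
  -- surjectivity onto Fin t
  have hsurj : ∀ i : Fin t, ∃ a ∈ s, f a = i := by
    intro i
    by_contra hno
    push_neg at hno
    have hri : Sum.inr i ∉ s := fun h => hno _ h rfl
    have hind : IsIndep (whisker G π) (insert (Sum.inr i) s) := by
      intro u hu v hv
      rcases Finset.mem_insert.1 hu with hu | hu <;>
        rcases Finset.mem_insert.1 hv with hv | hv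
      · subst hu; subst hv; exact (whisker G π).irrefl
      · subst hu
        rcases v with w | j
        · intro hadj
          have : w ∈ π.part i := by
            have := ((whisker_adj_lr G π w i).1 hadj.symm)
            exact this
          exact hno _ hv (huniq w i this)
        · exact whisker_not_adj_rr G π i j
      · subst hv
        rcases u with w | j
        · intro hadj
          have : w ∈ π.part i := (whisker_adj_lr G π w i).1 hadj
          exact hno _ hu (huniq w i this)
        · exact whisker_not_adj_rr G π j i
      · exact hs _ hu _ hv
    have := hmax _ hind (Finset.subset_insert _ _)
    exact hri (this ▸ Finset.mem_insert_self _ _)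
  calc s.card = (Finset.univ : Finset (Fin t)).card :=
        Finset.card_bij (fun a _ => f a) (fun a _ => Finset.mem_univ _) hinj
          (fun i _ => by obtain ⟨a, ha, hfa⟩ := hsurj i; exact ⟨a, ha, hfa⟩)
    _ = t := by simp
end

section
/- Let G be a finite simple graph and let π = (W_1, …, W_t) be a clique vertex-partition of G. Then the independence complex Ind(G^π) of the clique-whiskered graph G^π is vertex-decomposable. -/
/-- A simplicial complex (given by its membership predicate on finsets) is pure:
all maximal faces have the same cardinality. -/
def IsPureCpx {α : Type*} (Δ : Finset α → Prop) : Prop :=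
  ∀ s t : Finset α, Δ s → Δ t →
    (∀ s', Δ s' → s ⊆ s' → s = s') → (∀ t', Δ t' → t ⊆ t' → t = t') → s.card = t.card

/-- Vertex-decomposability of a simplicial complex: either it is a simplex, or it has a
shedding vertex `v` such that both the link and the deletion of `v` are pure and
vertex-decomposable. -/
inductive VertexDecomposable {α : Type*} [DecidableEq α] : (Finset α → Prop) → Prop
  | simplex {Δ : Finset α → Prop} (F : Finset α) (h : ∀ s, Δ s ↔ s ⊆ F) :
      VertexDecomposable Δ
  | shed {Δ : Finset α → Prop} (v : α) (hv : Δ {v})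
      (hlinkPure : IsPureCpx (fun s => v ∉ s ∧ Δ (insert v s)))
      (hdelPure : IsPureCpx (fun s => v ∉ s ∧ Δ s))
      (hlink : VertexDecomposable (fun s => v ∉ s ∧ Δ (insert v s)))
      (hdel : VertexDecomposable (fun s => v ∉ s ∧ Δ s)) :
      VertexDecomposable Δ

section Aux

set_option linter.unusedSectionVars false

variable {V : Type*} [Fintype V] [DecidableEq V] (G : SimpleGraph V) {t : ℕ}
  (π : CliquePartition G t)

lemma wadj_inl_inl {u v : V} :
    (whisker G π).Adj (Sum.inl u) (Sum.inl v) ↔ G.Adj u v := by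
  rw [whisker, SimpleGraph.fromRel_adj]
  constructor
  · rintro ⟨-, h | h⟩
    · exact h
    · exact h.symm
  · intro h
    exact ⟨by simpa using h.ne, Or.inl h⟩

lemma wadj_inl_inr {v : V} {i : Fin t} :
    (whisker G π).Adj (Sum.inl v) (Sum.inr i) ↔ v ∈ π.part i := by
  rw [whisker, SimpleGraph.fromRel_adj]
  constructor
  · rintro ⟨-, h | h⟩
    · exact h
    · exact h.elim
  · intro h
    exact ⟨by simp, Or.inl h⟩

lemma wadj_inr_inl {v : V} {i : Fin t} :
    (whisker G π).Adj (Sum.inr i) (Sum.inl v) ↔ v ∈ π.part i := by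
  rw [SimpleGraph.adj_comm]; exact wadj_inl_inr G π

lemma wadj_inr_inr {i j : Fin t} :
    ¬ (whisker G π).Adj (Sum.inr i) (Sum.inr j) := by
  rw [whisker, SimpleGraph.fromRel_adj]
  rintro ⟨-, h | h⟩ <;> exact h

end Aux

section Aux2

set_option linter.unusedSectionVars false

variable {V : Type*} [Fintype V] [DecidableEq V] (G : SimpleGraph V) {t : ℕ}
  (π : CliquePartition G t)

/-- The sub-complex of the independence complex with allowed vertex set `S`. -/
def DeltaS (S s : Finset (V ⊕ Fin t)) : Prop :=
  s ⊆ S ∧ IsIndep (whisker G π) s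

/-- Invariant: if a whisker vertex is missing from `S`, its whole clique is missing. -/
def GoodS (S : Finset (V ⊕ Fin t)) : Prop :=
  ∀ i : Fin t, Sum.inr i ∉ S → ∀ v ∈ π.part i, Sum.inl v ∉ S

lemma pure_good (S : Finset (V ⊕ Fin t)) (hS : GoodS G π S) :
    IsPureCpx (DeltaS G π S) := by
  classical
  let f : V ⊕ Fin t → Fin t := Sum.elim (fun v => (π.cover v).choose) id
  have hfmem : ∀ v : V, v ∈ π.part (f (Sum.inl v)) := fun v => (π.cover v).choose_spec
  have hfuniq : ∀ (v : V) (i : Fin t), v ∈ π.part i → f (Sum.inl v) = i := by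
    intro v i hv
    by_contra hne
    exact (Finset.disjoint_left.mp (π.disj _ _ hne)) (hfmem v) hv
  have key : ∀ F : Finset (V ⊕ Fin t), DeltaS G π S F →
      (∀ F', DeltaS G π S F' → F ⊆ F' → F = F') →
      F.card = (Finset.univ.filter (fun i : Fin t => Sum.inr i ∈ S)).card := by
    intro F ⟨hFS, hFind⟩ hFmax
    apply Finset.card_bij (fun a _ => f a)
    · -- maps into target
      rintro (v | i) ha
      · simp only [Finset.mem_filter, Finset.mem_univ, true_and]
        by_contra hni
        exact hS _ hni v (hfmem v) (hFS ha)
      · exact Finset.mem_filter.mpr ⟨Finset.mem_univ _, hFS ha⟩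
    · -- injective
      rintro (u | i) ha (v | j) hb hfe
      · by_contra hne
        have huv : u ≠ v := by simpa using hne
        have h2 : v ∈ π.part (f (Sum.inl u)) := by rw [hfe]; exact hfmem v
        have : G.Adj u v := π.clique _ (hfmem u) h2 huv
        exact hFind _ ha _ hb ((wadj_inl_inl G π).mpr this)
      · have h2 : u ∈ π.part j := by
          have := hfmem u; rw [hfe] at this; exact this
        exact absurd ((wadj_inl_inr G π).mpr h2) (hFind _ ha _ hb)
      · have h2 : v ∈ π.part i := by
          have := hfmem v; rw [← hfe] at this; exact this
        exact absurd ((wadj_inr_inl G π).mpr h2) (hFind _ ha _ hb)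
      · have : i = j := by
          rw [show f (Sum.inr i) = i from rfl, show f (Sum.inr j) = j from rfl] at hfe
          exact hfe
        rw [this]
    · -- surjective
      intro i hi
      simp only [Finset.mem_filter, Finset.mem_univ, true_and] at hi
      by_contra hno
      push_neg at hno
      have hiF : Sum.inr i ∉ F := fun h => hno _ h rfl
      have hins : DeltaS G π S (insert (Sum.inr i) F) := by
        refine ⟨Finset.insert_subset hi hFS, ?_⟩
        intro a ha b hb
        rcases Finset.mem_insert.mp ha with rfl | ha <;>
          rcases Finset.mem_insert.mp hb with rfl | hb
        · exact fun h => (whisker G π).irrefl h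
        · rcases b with v | j
          · intro h
            have hv : v ∈ π.part i := (wadj_inr_inl G π).mp h
            exact hno _ hb (hfuniq v i hv)
          · exact wadj_inr_inr G π
        · rcases a with v | j
          · intro h
            have hv : v ∈ π.part i := (wadj_inl_inr G π).mp h
            exact hno _ ha (hfuniq v i hv)
          · exact fun h => wadj_inr_inr G π h.symm
        · exact hFind _ ha _ hb
      have := hFmax _ hins (Finset.subset_insert _ _)
      exact hiF (this ▸ Finset.mem_insert_self _ _)
  intro s u hs hu hsmax humax
  rw [key s hs hsmax, key u hu humax]

lemma good_vd (S : Finset (V ⊕ Fin t)) (hS : GoodS G π S) :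
    VertexDecomposable (DeltaS G π S) := by
  classical
  induction S using Finset.strongInduction with
  | _ S ih =>
  by_cases h : ∃ v : V, Sum.inl v ∈ S
  · obtain ⟨v, hvS⟩ := h
    set S' : Finset (V ⊕ Fin t) :=
      S.filter (fun a => a ≠ Sum.inl v ∧ ¬ (whisker G π).Adj (Sum.inl v) a) with hS'def
    have hL : (fun s => Sum.inl v ∉ s ∧ DeltaS G π S (insert (Sum.inl v) s))
        = DeltaS G π S' := by
      funext s
      apply propext
      constructor
      · rintro ⟨hvs, hsub, hind⟩
        refine ⟨?_, ?_⟩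
        · intro a ha
          refine Finset.mem_filter.mpr ⟨hsub (Finset.mem_insert_of_mem ha), ?_, ?_⟩
          · rintro rfl; exact hvs ha
          · exact hind _ (Finset.mem_insert_self _ _) _ (Finset.mem_insert_of_mem ha)
        · intro a ha b hb
          exact hind _ (Finset.mem_insert_of_mem ha) _ (Finset.mem_insert_of_mem hb)
      · rintro ⟨hsub, hind⟩
        have hprop : ∀ a ∈ s, a ∈ S ∧ a ≠ Sum.inl v ∧ ¬ (whisker G π).Adj (Sum.inl v) a := by
          intro a ha
          have := hsub ha
          rw [hS'def, Finset.mem_filter] at this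
          exact ⟨this.1, this.2⟩
        refine ⟨fun hvs => (hprop _ hvs).2.1 rfl, ?_, ?_⟩
        · exact Finset.insert_subset hvS (fun a ha => (hprop _ ha).1)
        · intro a ha b hb
          rcases Finset.mem_insert.mp ha with rfl | ha <;>
            rcases Finset.mem_insert.mp hb with rfl | hb
          · exact fun h => (whisker G π).irrefl h
          · exact (hprop _ hb).2.2
          · exact fun h => (hprop _ ha).2.2 h.symm
          · exact hind _ ha _ hb
    have hD : (fun s => Sum.inl v ∉ s ∧ DeltaS G π S s)
        = DeltaS G π (S.erase (Sum.inl v)) := by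
      funext s
      apply propext
      constructor
      · rintro ⟨hvs, hsub, hind⟩
        exact ⟨(Finset.subset_erase).mpr ⟨hsub, hvs⟩, hind⟩
      · rintro ⟨hsub, hind⟩
        have := (Finset.subset_erase).mp hsub
        exact ⟨this.2, this.1, hind⟩
    have hgood' : GoodS G π S' := by
      intro j hj u hu
      rw [hS'def, Finset.mem_filter] at hj
      push_neg at hj
      intro hmem
      rw [hS'def, Finset.mem_filter] at hmem
      obtain ⟨huS, hne, hnadj⟩ := hmem
      by_cases hjS : Sum.inr j ∈ S
      · have h2 : (whisker G π).Adj (Sum.inl v) (Sum.inr j) := hj hjS (by simp)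
        -- Sum.inr j is adjacent to Sum.inl v, i.e., v ∈ π.part j
        have hvj : v ∈ π.part j := (wadj_inl_inr G π).mp h2
        by_cases huv : u = v
        · exact hne (by rw [huv])
        · exact hnadj ((wadj_inl_inl G π).mpr (π.clique j hvj hu (fun h => huv h.symm)))
      · exact hS j hjS u hu huS
    have hgoodD : GoodS G π (S.erase (Sum.inl v)) := by
      intro j hj u hu
      have : Sum.inr j ∉ S := fun h => hj (Finset.mem_erase.mpr ⟨by simp, h⟩)
      intro hmem
      exact hS j this u hu (Finset.mem_of_mem_erase hmem)
    have hss' : S' ⊂ S := by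
      refine (Finset.ssubset_iff_of_subset (Finset.filter_subset _ _)).mpr ⟨Sum.inl v, hvS, ?_⟩
      simp only [Finset.mem_filter]
      rintro ⟨-, h1, -⟩
      exact h1 rfl
    have hssD : S.erase (Sum.inl v) ⊂ S := Finset.erase_ssubset hvS
    refine VertexDecomposable.shed (Sum.inl v) ?_ ?_ ?_ ?_ ?_
    · exact ⟨Finset.singleton_subset_iff.mpr hvS, by
        intro a ha b hb
        rw [Finset.mem_singleton] at ha hb
        subst ha; subst hb
        exact fun h => (whisker G π).irrefl h⟩
    · rw [hL]; exact pure_good G π S' hgood'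
    · rw [hD]; exact pure_good G π _ hgoodD
    · rw [hL]; exact ih S' hss' hgood'
    · rw [hD]; exact ih _ hssD hgoodD
  · push_neg at h
    apply VertexDecomposable.simplex S
    intro s
    constructor
    · exact fun hs => hs.1
    · intro hs
      refine ⟨hs, ?_⟩
      intro a ha b hb
      rcases a with u | i
      · exact absurd (hs ha) (h u)
      · rcases b with w | j
        · exact absurd (hs hb) (h w)
        · exact wadj_inr_inr G π

end Aux2

/-- The independence complex of a clique-whiskered graph is vertex-decomposable. -/
theorem whisker_vertexDecomposable {V : Type*} [Fintype V] [DecidableEq V]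
    (G : SimpleGraph V) {t : ℕ} (π : CliquePartition G t) :
    VertexDecomposable (fun s : Finset (V ⊕ Fin t) => IsIndep (whisker G π) s) := by
  have : (fun s : Finset (V ⊕ Fin t) => IsIndep (whisker G π) s)
      = DeltaS G π Finset.univ := by
    funext s
    apply propext
    exact ⟨fun h => ⟨Finset.subset_univ _, h⟩, fun h => h.2⟩
  rw [this]
  exact good_vd G π Finset.univ (fun i hi => absurd (Finset.mem_univ _) hi)
end

section
/- There is no finite simple graph G and integer d ≥ 2 such that, for every j ≥ 0, the number of independent sets of cardinality j in G equals C(d, j) + 3·C(d−1, j−1) + 3·C(d−2, j−2) (where C(a,b) = 0 if b < 0 or b > a). In other words, no flag complex has h-vector with nonzero part (1, 3, 3), even though (1, 3, 3) is the face vector of a simplicial complex (the boundary of a triangle). -/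
/-- The number of independent sets of cardinality `k` in `G`
(the face number `f_{k-1}` of the independence complex of `G`). -/
noncomputable def indepCount {V : Type*} (G : SimpleGraph V) (k : ℕ) : ℕ :=
  Set.ncard {s : Finset V | IsIndep G s ∧ s.card = k}

/-- No flag complex has `h`-vector with nonzero part `(1, 3, 3)`: there is no graph `G` and
`d ≥ 2` such that for all `j` the number of independent sets of cardinality `j` in `G` is
`C(d,j) + 3·C(d-1,j-1) + 3·C(d-2,j-2)` (with `C(a,b) = 0` when `b < 0`). -/
theorem no_flag_h_one_three_three :
    ¬ ∃ (V : Type) (_ : Fintype V) (G : SimpleGraph V) (d : ℕ), 2 ≤ d ∧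
      ∀ j : ℕ, indepCount G j =
        d.choose j + (if 1 ≤ j then 3 * (d - 1).choose (j - 1) else 0)
          + (if 2 ≤ j then 3 * (d - 2).choose (j - 2) else 0) := by
  rintro ⟨V, _, G, d, hd, hf⟩
  classical
  -- express indepCount as a finset card
  have key : ∀ k : ℕ, indepCount G k
      = (Finset.univ.filter (fun s : Finset V => IsIndep G s ∧ s.card = k)).card := by
    intro k
    rw [indepCount, Set.ncard_eq_toFinset_card']
    congr 1
    ext s
    simp
  -- number of k-subsets
  have hsubcard : ∀ k : ℕ,
      (Finset.univ.filter (fun s : Finset V => s.card = k)).card = (Fintype.card V).choose k := by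
    intro k
    rw [← Finset.powerset_univ, ← Finset.powersetCard_eq_filter, Finset.card_powersetCard,
      Finset.card_univ]
  -- |V| = d + 3
  have hn : Fintype.card V = d + 3 := by
    have h1 : (Finset.univ.filter (fun s : Finset V => IsIndep G s ∧ s.card = 1))
        = Finset.univ.filter (fun s : Finset V => s.card = 1) := by
      ext s
      simp only [Finset.mem_filter, Finset.mem_univ, true_and, and_iff_right_iff_imp]
      intro hs
      obtain ⟨a, rfl⟩ := Finset.card_eq_one.mp hs
      intro u hu v hv
      simp only [Finset.mem_singleton] at hu hv
      subst hu; subst hv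
      exact G.irrefl
    have h2 := hf 1
    rw [key 1, h1, hsubcard 1] at h2
    simp [Nat.choose_one_right] at h2
    omega
  -- number of independent 2-sets
  have hf2 : (Finset.univ.filter (fun s : Finset V => IsIndep G s ∧ s.card = 2)).card
      = d.choose 2 + 3 * d := by
    have h2 := hf 2
    rw [key 2] at h2
    simp [Nat.choose_one_right] at h2
    omega
  -- the set of "edges"
  set B : Finset (Finset V) :=
    Finset.univ.filter (fun s : Finset V => ¬ IsIndep G s ∧ s.card = 2) with hBdef
  have hB3 : B.card = 3 := by
    have hsplit : (Finset.univ.filter (fun s : Finset V => IsIndep G s ∧ s.card = 2)).card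
        + B.card = (Finset.univ.filter (fun s : Finset V => s.card = 2)).card := by
      have := Finset.card_filter_add_card_filter_not
        (s := Finset.univ.filter (fun s : Finset V => s.card = 2)) (p := fun s => IsIndep G s)
      rw [Finset.filter_filter, Finset.filter_filter] at this
      rw [hBdef]
      have e1 : (Finset.univ.filter (fun s : Finset V => IsIndep G s ∧ s.card = 2))
          = Finset.univ.filter (fun s : Finset V => s.card = 2 ∧ IsIndep G s) := by
        apply Finset.filter_congr; intro s _; exact and_comm
      have e2 : (Finset.univ.filter (fun s : Finset V => ¬ IsIndep G s ∧ s.card = 2))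
          = Finset.univ.filter (fun s : Finset V => s.card = 2 ∧ ¬ IsIndep G s) := by
        apply Finset.filter_congr; intro s _; exact and_comm
      rw [e1, e2]
      exact this
    rw [hf2, hsubcard 2, hn] at hsplit
    have step : ∀ m : ℕ, (m + 1).choose 2 = m.choose 2 + m := by
      intro m
      rw [show (2 : ℕ) = 1 + 1 from rfl, Nat.choose_succ_succ, Nat.choose_one_right]
      show m + m.choose 2 = m.choose 2 + m
      omega
    have e3 : (d + 3).choose 2 = (d + 2).choose 2 + (d + 2) := step (d + 2)
    have e2 : (d + 2).choose 2 = (d + 1).choose 2 + (d + 1) := step (d + 1)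
    have e1 : (d + 1).choose 2 = d.choose 2 + d := step d
    omega
  -- no independent sets of size d+1 or d+2
  have hNI : ∀ s : Finset V, IsIndep G s → s.card ≠ d + 1 ∧ s.card ≠ d + 2 := by
    intro s hs
    constructor
    · intro hcard
      have h := hf (d + 1)
      rw [key (d + 1)] at h
      have c1 : d.choose (d + 1) = 0 := Nat.choose_eq_zero_of_lt (by omega)
      have c2 : (d - 1).choose (d + 1 - 1) = 0 := Nat.choose_eq_zero_of_lt (by omega)
      have c3 : (d - 2).choose (d + 1 - 2) = 0 := Nat.choose_eq_zero_of_lt (by omega)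
      rw [c1, c2, c3] at h
      simp only [mul_zero, ite_self, add_zero, Finset.card_eq_zero] at h
      have : s ∈ Finset.univ.filter (fun s : Finset V => IsIndep G s ∧ s.card = d + 1) := by
        simp [hs, hcard]
      rw [h] at this
      exact absurd this (Finset.notMem_empty s)
    · intro hcard
      have h := hf (d + 2)
      rw [key (d + 2)] at h
      have c1 : d.choose (d + 2) = 0 := Nat.choose_eq_zero_of_lt (by omega)
      have c2 : (d - 1).choose (d + 2 - 1) = 0 := Nat.choose_eq_zero_of_lt (by omega)
      have c3 : (d - 2).choose (d + 2 - 2) = 0 := Nat.choose_eq_zero_of_lt (by omega)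
      rw [c1, c2, c3] at h
      simp only [mul_zero, ite_self, add_zero, Finset.card_eq_zero] at h
      have : s ∈ Finset.univ.filter (fun s : Finset V => IsIndep G s ∧ s.card = d + 2) := by
        simp [hs, hcard]
      rw [h] at this
      exact absurd this (Finset.notMem_empty s)
  -- every pair of vertices misses some edge
  have no2cover : ∀ a b : V, ∃ e ∈ B, a ∉ e ∧ b ∉ e := by
    intro a b
    set S : Finset V := Finset.univ \ {a, b} with hSdef
    have hScard : S.card = Fintype.card V - ({a, b} : Finset V).card := by
      rw [hSdef, Finset.card_sdiff_of_subset (Finset.subset_univ _), Finset.card_univ]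
    have habcard : ({a, b} : Finset V).card = 1 ∨ ({a, b} : Finset V).card = 2 := by
      by_cases hab : a = b
      · left; subst hab; simp
      · right; exact Finset.card_pair hab
    have hSnotind : ¬ IsIndep G S := by
      intro hind
      have := hNI S hind
      rw [hScard, hn] at this
      rcases habcard with h | h <;> omega
    rw [IsIndep] at hSnotind
    push_neg at hSnotind
    obtain ⟨u, hu, v, hv, hadj⟩ := hSnotind
    refine ⟨{u, v}, ?_, ?_, ?_⟩
    · rw [hBdef]
      simp only [Finset.mem_filter, Finset.mem_univ, true_and]
      refine ⟨fun h => h u (by simp) v (by simp) hadj, Finset.card_pair hadj.ne⟩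
    · intro ha
      rw [hSdef] at hu hv
      simp only [Finset.mem_sdiff, Finset.mem_insert, Finset.mem_singleton] at hu hv
      rcases Finset.mem_insert.mp ha with h | h
      · exact hu.2 (Or.inl h.symm)
      · rw [Finset.mem_singleton] at h; exact hv.2 (Or.inl h.symm)
    · intro hb
      rw [hSdef] at hu hv
      simp only [Finset.mem_sdiff, Finset.mem_insert, Finset.mem_singleton] at hu hv
      rcases Finset.mem_insert.mp hb with h | h
      · exact hu.2 (Or.inr h.symm)
      · rw [Finset.mem_singleton] at h; exact hv.2 (Or.inr h.symm)
  -- edges are pairwise disjoint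
  have hdisj : ∀ e₁ ∈ B, ∀ e₂ ∈ B, e₁ ≠ e₂ → ∀ v : V, v ∈ e₁ → v ∈ e₂ → False := by
    intro e₁ he₁ e₂ he₂ hne a ha₁ ha₂
    obtain ⟨g, hg, hag, -⟩ := no2cover a a
    have hgcard : g.card = 2 := by
      rw [hBdef] at hg; simp only [Finset.mem_filter] at hg; exact hg.2.2
    obtain ⟨u, hu⟩ := Finset.card_pos.mp (by omega : 0 < g.card)
    obtain ⟨h, hh, hah, huh⟩ := no2cover a u
    have hge₁ : g ≠ e₁ := fun he => hag (he ▸ ha₁)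
    have hge₂ : g ≠ e₂ := fun he => hag (he ▸ ha₂)
    have hBeq3 : ({e₁, e₂, g} : Finset (Finset V)) = B := by
      apply Finset.eq_of_subset_of_card_le
      · intro x hx
        simp only [Finset.mem_insert, Finset.mem_singleton] at hx
        rcases hx with rfl | rfl | rfl <;> assumption
      · rw [hB3]
        rw [Finset.card_insert_of_notMem (by simp [hne, hge₁.symm]),
          Finset.card_insert_of_notMem (by simp [hge₂.symm])]
        simp
    rw [← hBeq3] at hh
    simp only [Finset.mem_insert, Finset.mem_singleton] at hh
    rcases hh with rfl | rfl | rfl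
    · exact hah ha₁
    · exact hah ha₂
    · exact huh hu
  -- get the three edges
  obtain ⟨f₁, f₂, f₃, h12, h13, h23, hBeq⟩ := Finset.card_eq_three.mp hB3
  have hf₁B : f₁ ∈ B := by rw [hBeq]; simp
  have hf₂B : f₂ ∈ B := by rw [hBeq]; simp
  have hf₃B : f₃ ∈ B := by rw [hBeq]; simp
  have hc : ∀ f ∈ B, f.card = 2 := by
    intro f hfB; rw [hBdef] at hfB; simp only [Finset.mem_filter] at hfB; exact hfB.2.2
  have d12 := hdisj f₁ hf₁B f₂ hf₂B h12
  have d13 := hdisj f₁ hf₁B f₃ hf₃B h13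
  have d23 := hdisj f₂ hf₂B f₃ hf₃B h23
  -- the 8 transversals
  set P : Finset (V × V × V) := f₁ ×ˢ f₂ ×ˢ f₃ with hPdef
  have hPcard : P.card = 8 := by
    rw [hPdef, Finset.card_product, Finset.card_product, hc f₁ hf₁B, hc f₂ hf₂B, hc f₃ hf₃B]
  set φ : V × V × V → Finset V := fun p => Finset.univ \ {p.1, p.2.1, p.2.2} with hφdef
  have hmemP : ∀ p : V × V × V, p ∈ P → p.1 ∈ f₁ ∧ p.2.1 ∈ f₂ ∧ p.2.2 ∈ f₃ := by
    intro p hp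
    rw [hPdef, Finset.mem_product, Finset.mem_product] at hp
    exact ⟨hp.1, hp.2.1, hp.2.2⟩
  -- image lands in independent d-sets
  have himg : P.image φ ⊆ Finset.univ.filter (fun s : Finset V => IsIndep G s ∧ s.card = d) := by
    intro S hS
    obtain ⟨⟨x, y, z⟩, hp, rfl⟩ := Finset.mem_image.mp hS
    obtain ⟨hx, hy, hz⟩ := hmemP _ hp
    have hxy : x ≠ y := fun h => d12 x hx (h ▸ hy)
    have hxz : x ≠ z := fun h => d13 x hx (h ▸ hz)
    have hyz : y ≠ z := fun h => d23 y hy (h ▸ hz)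
    have hT3 : ({x, y, z} : Finset V).card = 3 := by
      rw [Finset.card_insert_of_notMem (by simp [hxy, hxz]),
        Finset.card_insert_of_notMem (by simp [hyz])]
      simp
    simp only [Finset.mem_filter, Finset.mem_univ, true_and]
    constructor
    · intro u hu v hv hadj
      have huvB : ({u, v} : Finset V) ∈ B := by
        rw [hBdef]
        simp only [Finset.mem_filter, Finset.mem_univ, true_and]
        exact ⟨fun h => h u (by simp) v (by simp) hadj, Finset.card_pair hadj.ne⟩
      rw [hBeq] at huvB
      simp only [Finset.mem_insert, Finset.mem_singleton] at huvB
      simp only [hφdef, Finset.mem_sdiff] at hu hv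
      rcases huvB with he | he | he
      · have : x ∈ ({u, v} : Finset V) := he ▸ hx
        simp only [Finset.mem_insert, Finset.mem_singleton] at this
        rcases this with rfl | rfl
        · exact hu.2 (by simp)
        · exact hv.2 (by simp)
      · have : y ∈ ({u, v} : Finset V) := he ▸ hy
        simp only [Finset.mem_insert, Finset.mem_singleton] at this
        rcases this with rfl | rfl
        · exact hu.2 (by simp)
        · exact hv.2 (by simp)
      · have : z ∈ ({u, v} : Finset V) := he ▸ hz
        simp only [Finset.mem_insert, Finset.mem_singleton] at this
        rcases this with rfl | rfl
        · exact hu.2 (by simp)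
        · exact hv.2 (by simp)
    · rw [hφdef]
      simp only
      rw [Finset.card_sdiff_of_subset (Finset.subset_univ _), Finset.card_univ, hT3, hn]
      omega
  -- φ is injective on P
  have hinj : Set.InjOn φ P := by
    rintro ⟨x, y, z⟩ hp ⟨x', y', z'⟩ hp' heq
    obtain ⟨hx, hy, hz⟩ := hmemP _ (by simpa using hp)
    obtain ⟨hx', hy', hz'⟩ := hmemP _ (by simpa using hp')
    have hTeq : ({x, y, z} : Finset V) = {x', y', z'} := by
      have h1 : Finset.univ \ (Finset.univ \ ({x, y, z} : Finset V))
          = Finset.univ \ (Finset.univ \ ({x', y', z'} : Finset V)) := by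
        simp only [hφdef] at heq
        rw [heq]
      rwa [Finset.sdiff_sdiff_eq_self (Finset.subset_univ _),
        Finset.sdiff_sdiff_eq_self (Finset.subset_univ _)] at h1
    have hxx : x = x' := by
      have : x' ∈ ({x, y, z} : Finset V) := by rw [hTeq]; simp
      simp only [Finset.mem_insert, Finset.mem_singleton] at this
      rcases this with h | h | h
      · exact h.symm
      · exact absurd (h ▸ hy) (fun hm => d12 x' hx' hm)
      · exact absurd (h ▸ hz) (fun hm => d13 x' hx' hm)
    have hyy : y = y' := by
      have : y' ∈ ({x, y, z} : Finset V) := by rw [hTeq]; simp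
      simp only [Finset.mem_insert, Finset.mem_singleton] at this
      rcases this with h | h | h
      · exact absurd (h ▸ hx) (fun hm => d12 y' hm hy')
      · exact h.symm
      · exact absurd (h ▸ hz) (fun hm => d23 y' hy' hm)
    have hzz : z = z' := by
      have : z' ∈ ({x, y, z} : Finset V) := by rw [hTeq]; simp
      simp only [Finset.mem_insert, Finset.mem_singleton] at this
      rcases this with h | h | h
      · exact absurd (h ▸ hx) (fun hm => d13 z' hm hz')
      · exact absurd (h ▸ hy) (fun hm => d23 z' hm hz')
      · exact h.symm
    simp [hxx, hyy, hzz]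
  -- count: 8 ≤ 7
  have h7 : (Finset.univ.filter (fun s : Finset V => IsIndep G s ∧ s.card = d)).card = 7 := by
    have h := hf d
    rw [key d] at h
    rw [Nat.choose_self, if_pos (by omega : 1 ≤ d), if_pos hd, Nat.choose_self,
      Nat.choose_self] at h
    omega
  have h8 : (P.image φ).card = 8 := by
    rw [Finset.card_image_of_injOn hinj, hPcard]
  have := Finset.card_le_card himg
  rw [h8, h7] at this
  omega
end

section
/- Let G be a bipartite graph without isolated vertices that admits a pure order. If some pure order of G has a cross, then every pure order of G has a cross. -/
/-- A pure order of a bipartite graph `G` (without isolated vertices): enumerations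
`x_1, …, x_n` and `y_1, …, y_n` of the two parts of a bipartition of the vertex set such
that every `x_i y_i` is an edge, and whenever `i, j, k` are distinct and `x_i y_j` and
`x_j y_k` are edges, so is `x_i y_k`. -/
structure PureOrder {V : Type*} (G : SimpleGraph V) (n : ℕ) where
  x : Fin n → V
  y : Fin n → V
  inj : Function.Injective (Sum.elim x y)
  cover : ∀ v : V, (∃ i, v = x i) ∨ (∃ i, v = y i)
  xIndep : ∀ i j, ¬ G.Adj (x i) (x j)
  yIndep : ∀ i j, ¬ G.Adj (y i) (y j)
  matching : ∀ i, G.Adj (x i) (y i)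
  pureCond : ∀ i j k, i ≠ j → j ≠ k → i ≠ k →
    G.Adj (x i) (y j) → G.Adj (x j) (y k) → G.Adj (x i) (y k)

/-- A pure order has a cross if `x_i y_j` and `x_j y_i` are both edges for some `i ≠ j`. -/
def PureOrder.HasCross {V : Type*} {G : SimpleGraph V} {n : ℕ} (P : PureOrder G n) : Prop :=
  ∃ i j, i ≠ j ∧ G.Adj (P.x i) (P.y j) ∧ G.Adj (P.x j) (P.y i)

/-- Two vertices are `Paired` by `P` if they form a matching edge `x_i y_i` of `P`. -/
def PureOrder.Paired {V : Type*} {G : SimpleGraph V} {n : ℕ} (P : PureOrder G n)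
    (u v : V) : Prop :=
  ∃ i, (u = P.x i ∧ v = P.y i) ∨ (u = P.y i ∧ v = P.x i)

theorem PureOrder.paired_symm {V : Type*} {G : SimpleGraph V} {n : ℕ} {P : PureOrder G n}
    {u v : V} (h : P.Paired u v) : P.Paired v u := by
  obtain ⟨i, h | h⟩ := h
  · exact ⟨i, Or.inr ⟨h.2, h.1⟩⟩
  · exact ⟨i, Or.inl ⟨h.2, h.1⟩⟩

theorem PureOrder.paired_adj {V : Type*} {G : SimpleGraph V} {n : ℕ} {P : PureOrder G n}
    {u v : V} (h : P.Paired u v) : G.Adj u v := by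
  obtain ⟨i, ⟨hu, hv⟩ | ⟨hu, hv⟩⟩ := h
  · subst hu; subst hv; exact P.matching i
  · subst hu; subst hv; exact (P.matching i).symm

theorem PureOrder.exists_paired {V : Type*} {G : SimpleGraph V} {n : ℕ} (P : PureOrder G n)
    (v : V) : ∃ w, P.Paired v w := by
  rcases P.cover v with ⟨i, hi⟩ | ⟨i, hi⟩
  · exact ⟨P.y i, i, Or.inl ⟨hi, rfl⟩⟩
  · exact ⟨P.x i, i, Or.inr ⟨hi, rfl⟩⟩

theorem PureOrder.x_ne_y {V : Type*} {G : SimpleGraph V} {n : ℕ} (P : PureOrder G n)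
    (i j : Fin n) : P.x i ≠ P.y j := by
  intro h
  have := P.inj (a₁ := Sum.inl i) (a₂ := Sum.inr j) h
  simp at this

theorem PureOrder.x_injective {V : Type*} {G : SimpleGraph V} {n : ℕ} (P : PureOrder G n) :
    Function.Injective P.x := by
  intro i j h
  have := P.inj (a₁ := Sum.inl i) (a₂ := Sum.inl j) h
  simpa using this

theorem PureOrder.y_injective {V : Type*} {G : SimpleGraph V} {n : ℕ} (P : PureOrder G n) :
    Function.Injective P.y := by
  intro i j h
  have := P.inj (a₁ := Sum.inr i) (a₂ := Sum.inr j) h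
  simpa using this

theorem PureOrder.paired_unique {V : Type*} {G : SimpleGraph V} {n : ℕ} {P : PureOrder G n}
    {v w w' : V} (h : P.Paired v w) (h' : P.Paired v w') : w = w' := by
  obtain ⟨i, ⟨hv, hw⟩ | ⟨hv, hw⟩⟩ := h <;> obtain ⟨j, ⟨hv', hw'⟩ | ⟨hv', hw'⟩⟩ := h'
  · have : i = j := P.x_injective (hv ▸ hv')
    subst this; rw [hw, hw']
  · exact absurd (hv ▸ hv') (P.x_ne_y i j)
  · exact absurd (hv' ▸ hv) (P.x_ne_y j i)
  · have : i = j := P.y_injective (hv ▸ hv')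
    subst this; rw [hw, hw']

/-- If some pure order of a bipartite graph `G` has a cross, then every pure order of `G`
has a cross. -/
theorem hasCross_of_hasCross {V : Type*} [Fintype V] (G : SimpleGraph V) {n m : ℕ}
    (P : PureOrder G n) (hP : P.HasCross) (Q : PureOrder G m) : Q.HasCross := by
  classical
  by_contra hQ
  -- The relation `a ⪯ b ↔ Adj (Q.x a) (Q.y b)` is antisymmetric (cross-freeness of Q)...
  have antisym : ∀ a b : Fin m, G.Adj (Q.x a) (Q.y b) → G.Adj (Q.x b) (Q.y a) → a = b := by
    intro a b h1 h2
    by_contra hab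
    exact hQ ⟨a, b, hab, h1, h2⟩
  -- ... and transitive (purity of Q).
  have htrans : ∀ a b c : Fin m, G.Adj (Q.x a) (Q.y b) → G.Adj (Q.x b) (Q.y c) →
      G.Adj (Q.x a) (Q.y c) := by
    intro a b c h1 h2
    by_cases hab : a = b
    · subst hab; exact h2
    by_cases hbc : b = c
    · subst hbc; exact h1
    by_cases hac : a = c
    · subst hac; exact absurd (antisym a b h1 h2) hab
    · exact Q.pureCond a b c hab hbc hac h1 h2
  -- The matching of `P` induces a map σ on the indices of `Q` with `a ⪯ σ a`.
  have hexist : ∀ a : Fin m, ∃ b, P.Paired (Q.x a) (Q.y b) := by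
    intro a
    obtain ⟨w, hw⟩ := P.exists_paired (Q.x a)
    have hadj : G.Adj (Q.x a) w := PureOrder.paired_adj hw
    rcases Q.cover w with ⟨c, hc⟩ | ⟨b, hb⟩
    · exact absurd (hc ▸ hadj) (Q.xIndep a c)
    · exact ⟨b, hb ▸ hw⟩
  choose σ hσ using hexist
  have hσadj : ∀ a, G.Adj (Q.x a) (Q.y (σ a)) := fun a => PureOrder.paired_adj (hσ a)
  have hσinj : Function.Injective σ := by
    intro a b h
    have h1 : P.Paired (Q.y (σ a)) (Q.x a) := PureOrder.paired_symm (hσ a)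
    have h2 : P.Paired (Q.y (σ a)) (Q.x b) := by
      rw [h]; exact PureOrder.paired_symm (hσ b)
    exact Q.x_injective (PureOrder.paired_unique h1 h2)
  -- σ is a permutation, hence has finite order.
  have hbij : Function.Bijective σ := Finite.injective_iff_bijective.mp hσinj
  set e : Equiv.Perm (Fin m) := Equiv.ofBijective σ hbij with he
  have hea : ∀ a, e a = σ a := fun a => rfl
  have hiter : ∀ (k : ℕ) (a : Fin m), (e ^ k) a = σ^[k] a := by
    intro k
    induction k with
    | zero => intro a; simp
    | succ k ih =>
      intro a
      rw [pow_succ, Equiv.Perm.mul_apply, Function.iterate_succ_apply, hea]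
      exact ih (σ a)
  -- Since `a ⪯ σ a` for all `a` and `⪯` is a partial order, σ must be the identity.
  have hσid : ∀ a, σ a = a := by
    intro a
    by_contra hne
    have step : ∀ k : ℕ, G.Adj (Q.x a) (Q.y (σ^[k] (σ a))) ∧ a ≠ σ^[k] (σ a) := by
      intro k
      induction k with
      | zero => exact ⟨hσadj a, fun h => hne h.symm⟩
      | succ k ih =>
        constructor
        · rw [Function.iterate_succ_apply']
          exact htrans a _ _ ih.1 (hσadj _)
        · rw [Function.iterate_succ_apply']
          intro h
          have h2 := hσadj (σ^[k] (σ a))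
          rw [← h] at h2
          exact ih.2 (antisym a _ ih.1 h2)
    have hNpos : 0 < orderOf e := orderOf_pos e
    obtain ⟨k, hk⟩ := Nat.exists_eq_succ_of_ne_zero hNpos.ne'
    have h2 : (e ^ orderOf e) a = a := by rw [pow_orderOf_eq_one e]; rfl
    rw [hk, hiter (k + 1) a, Function.iterate_succ_apply] at h2
    exact (step k).2 h2.symm
  -- Hence the matching of `P` coincides with the matching of `Q`.
  have hpairX : ∀ a, P.Paired (Q.x a) (Q.y a) := by
    intro a
    have h := hσ a
    rw [hσid a] at h
    exact h
  have huniqX : ∀ a w, P.Paired (Q.x a) w → w = Q.y a :=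
    fun a w h => PureOrder.paired_unique h (hpairX a)
  have huniqY : ∀ b w, P.Paired (Q.y b) w → w = Q.x b :=
    fun b w h => PureOrder.paired_unique h (PureOrder.paired_symm (hpairX b))
  -- Transfer the cross of `P` to a cross of `Q`.
  obtain ⟨i, j, hij, h1, h2⟩ := hP
  have pi : P.Paired (P.x i) (P.y i) := ⟨i, Or.inl ⟨rfl, rfl⟩⟩
  have pj : P.Paired (P.x j) (P.y j) := ⟨j, Or.inl ⟨rfl, rfl⟩⟩
  rcases Q.cover (P.x i) with ⟨a, ha⟩ | ⟨a, ha⟩ <;>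
    rcases Q.cover (P.x j) with ⟨b, hb⟩ | ⟨b, hb⟩
  · -- both on the x-side of Q
    have hyi : P.y i = Q.y a := huniqX a _ (ha ▸ pi)
    have hyj : P.y j = Q.y b := huniqX b _ (hb ▸ pj)
    have hab : a ≠ b := fun h => hij (P.x_injective (by rw [ha, hb, h]))
    rw [ha, hyj] at h1
    rw [hb, hyi] at h2
    exact hQ ⟨a, b, hab, h1, h2⟩
  · -- mixed: contradiction with independence
    have hyj : P.y j = Q.x b := huniqY b _ (hb ▸ pj)
    rw [ha, hyj] at h1
    exact Q.xIndep a b h1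
  · -- mixed: contradiction with independence
    have hyj : P.y j = Q.y b := huniqX b _ (hb ▸ pj)
    rw [ha, hyj] at h1
    exact Q.yIndep a b h1
  · -- both on the y-side of Q
    have hyi : P.y i = Q.x a := huniqY a _ (ha ▸ pi)
    have hyj : P.y j = Q.x b := huniqY b _ (hb ▸ pj)
    have hab : a ≠ b := fun h => hij (P.x_injective (by rw [ha, hb, h]))
    rw [ha, hyj] at h1
    rw [hb, hyi] at h2
    exact hQ ⟨a, b, hab, h2.symm, h1.symm⟩
end

section
/- Let G be a bipartite graph without isolated vertices. If some pure order of G has a cross, then G admits no pure order X = {x_1, …, x_n}, Y = {y_1, …, y_n} with the property that every edge x_i y_j of G satisfies i ≤ j. (By the Herzog–Hibi criterion, this says that a bipartite graph with a pure order having a cross has a non-Cohen-Macaulay independence complex.) -/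
/-- A bipartite graph with a pure order that has a cross admits no pure order in which
every edge `x_i y_j` satisfies `i ≤ j` (by the Herzog–Hibi criterion, its independence
complex is not Cohen-Macaulay). -/
theorem no_CM_order_of_hasCross {V : Type*} [Fintype V] (G : SimpleGraph V) {n : ℕ}
    (P : PureOrder G n) (hP : P.HasCross) :
    ¬ ∃ (m : ℕ) (Q : PureOrder G m), ∀ i j, G.Adj (Q.x i) (Q.y j) → i ≤ j := by

  rintro ⟨m, Q, hQ⟩
  obtain ⟨i, j, hij, e1, e2⟩ := hP
  -- injectivity facts
  have pxinj : Function.Injective P.x := fun a b h => by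
    have := P.inj (a₁ := Sum.inl a) (a₂ := Sum.inl b) (by simpa using h)
    simpa using this
  have pyinj : Function.Injective P.y := fun a b h => by
    have := P.inj (a₁ := Sum.inr a) (a₂ := Sum.inr b) (by simpa using h)
    simpa using this
  have pxy : ∀ a b, P.x a ≠ P.y b := fun a b h => by
    have := P.inj (a₁ := Sum.inl a) (a₂ := Sum.inr b) (by simpa using h)
    simp at this
  have qxinj : Function.Injective Q.x := fun a b h => by
    have := Q.inj (a₁ := Sum.inl a) (a₂ := Sum.inl b) (by simpa using h)
    simpa using this
  have qyinj : Function.Injective Q.y := fun a b h => by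
    have := Q.inj (a₁ := Sum.inr a) (a₂ := Sum.inr b) (by simpa using h)
    simpa using this
  have qxy : ∀ a b, Q.x a ≠ Q.y b := fun a b h => by
    have := Q.inj (a₁ := Sum.inl a) (a₂ := Sum.inr b) (by simpa using h)
    simp at this
  -- key lemma: the matching of P agrees with the matching of Q
  have key : ∀ k : ℕ, ∀ t : Fin m, m - t.val ≤ k → ∀ a : Fin n,
      (P.x a = Q.x t → P.y a = Q.y t) ∧ (P.y a = Q.x t → P.x a = Q.y t) := by
    intro k
    induction k with
    | zero => intro t ht; exact absurd ht (by have := t.isLt; omega)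
    | succ k ih =>
      intro t ht a
      constructor
      · intro hx
        have hadj : G.Adj (Q.x t) (P.y a) := hx ▸ P.matching a
        obtain ⟨u, hu⟩ | ⟨s, hs⟩ := Q.cover (P.y a)
        · exact absurd (hu ▸ hadj) (Q.xIndep t u)
        · have hts : t ≤ s := hQ t s (hs ▸ hadj)
          rcases eq_or_lt_of_le hts with h | h
          · rw [hs, ← h]
          · have hsk : m - s.val ≤ k := by
              have h1 : t.val < s.val := h
              have := s.isLt
              omega
            obtain ⟨b, hb⟩ | ⟨b, hb⟩ := P.cover (Q.x s)
            · have hyb : P.y b = Q.y s := (ih s hsk b).1 hb.symm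
              have : b = a := pyinj (by rw [hyb, ← hs])
              subst this
              exact absurd (qxinj (hx.symm.trans hb.symm)) (ne_of_lt h)
            · have hxb : P.x b = Q.y s := (ih s hsk b).2 hb.symm
              exact absurd (hxb.trans hs.symm) (pxy b a)
      · intro hy
        have hadj : G.Adj (P.x a) (Q.x t) := hy ▸ P.matching a
        obtain ⟨u, hu⟩ | ⟨s, hs⟩ := Q.cover (P.x a)
        · exact absurd (hu ▸ hadj) (Q.xIndep u t)
        · have hadj' : G.Adj (Q.x t) (Q.y s) := (hs ▸ hadj).symm
          have hts : t ≤ s := hQ t s hadj'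
          rcases eq_or_lt_of_le hts with h | h
          · rw [hs, ← h]
          · have hsk : m - s.val ≤ k := by
              have h1 : t.val < s.val := h
              have := s.isLt
              omega
            obtain ⟨b, hb⟩ | ⟨b, hb⟩ := P.cover (Q.x s)
            · have hyb : P.y b = Q.y s := (ih s hsk b).1 hb.symm
              exact absurd (hyb.trans hs.symm).symm (pxy a b)
            · have hxb : P.x b = Q.y s := (ih s hsk b).2 hb.symm
              have : b = a := pxinj (by rw [hxb, ← hs])
              subst this
              exact absurd (qxinj (hy.symm.trans hb.symm)) (ne_of_lt h)
  have key' : ∀ t : Fin m, ∀ a : Fin n,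
      (P.x a = Q.x t → P.y a = Q.y t) ∧ (P.y a = Q.x t → P.x a = Q.y t) :=
    fun t => key (m - t.val) t le_rfl
  -- locate each matching pair of P inside Q
  have locate : ∀ a : Fin n, ∃ p : Fin m,
      (P.x a = Q.x p ∧ P.y a = Q.y p) ∨ (P.x a = Q.y p ∧ P.y a = Q.x p) := by
    intro a
    obtain ⟨p, hp⟩ | ⟨p, hp⟩ := Q.cover (P.x a)
    · exact ⟨p, Or.inl ⟨hp, (key' p a).1 hp⟩⟩
    · refine ⟨p, Or.inr ⟨hp, ?_⟩⟩
      obtain ⟨u, hu⟩ | ⟨u, hu⟩ := Q.cover (P.y a)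
      · have : P.x a = Q.y u := (key' u a).2 hu
        have : p = u := qyinj (hp.symm.trans this)
        rw [hu, this]
      · exact absurd (hp ▸ hu ▸ P.matching a) (Q.yIndep p u)
  obtain ⟨p, hp⟩ := locate i
  obtain ⟨q, hq⟩ := locate j
  rcases hp with ⟨hp1, hp2⟩ | ⟨hp1, hp2⟩ <;> rcases hq with ⟨hq1, hq2⟩ | ⟨hq1, hq2⟩
  · have h1 : p ≤ q := hQ p q (by rw [← hp1, ← hq2]; exact e1)
    have h2 : q ≤ p := hQ q p (by rw [← hq1, ← hp2]; exact e2)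
    have : p = q := le_antisymm h1 h2
    exact hij (pxinj (by rw [hp1, this, ← hq1]))
  · exact absurd (hp1 ▸ hq2 ▸ e1) (Q.xIndep p q)
  · exact absurd (hp1 ▸ hq2 ▸ e1) (Q.yIndep p q)
  · have h1 : q ≤ p := hQ q p (by rw [← hq2, ← hp1]; exact e1.symm)
    have h2 : p ≤ q := hQ p q (by rw [← hp2, ← hq1]; exact e2.symm)
    have : p = q := le_antisymm h2 h1
    exact hij (pxinj (by rw [hp1, this, ← hq1]))
end

section
/- Let G be a bipartite graph without isolated vertices, on at least two vertices, admitting a cross-free pure order X = {x_1, …, x_n}, Y = {y_1, …, y_n}. Then there exist indices i and j such that x_i has degree one in G and y_j has degree one in G; that is, G has two vertices of degree one lying in separate parts of the bipartition. -/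
/-- A cross-free bipartite graph with at least two vertices has, for any pure order, a
vertex of degree one in each part of the bipartition. -/
theorem crossFree_degree_one {V : Type*} [Fintype V] [DecidableEq V] (G : SimpleGraph V)
    [DecidableRel G.Adj] {n : ℕ} (hn : 1 ≤ n) (P : PureOrder G n) (hcf : ¬ P.HasCross) :
    ∃ i j : Fin n, G.degree (P.x i) = 1 ∧ G.degree (P.y j) = 1 := by
  classical
  haveI : Nonempty (Fin n) := ⟨⟨0, hn⟩⟩
  set s : Fin n → Fin n → Prop := fun a b => G.Adj (P.x a) (P.y b) ∧ a ≠ b with hs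
  have strans : Transitive s := by
    rintro a b c ⟨hab, hab'⟩ ⟨hbc, hbc'⟩
    have hac : a ≠ c := by
      rintro rfl
      exact hcf ⟨a, b, hab', hab, hbc⟩
    exact ⟨P.pureCond a b c hab' hbc' hac hab hbc, hac⟩
  have sirr : ∀ a, ¬ s a a := fun a h => h.2 rfl
  haveI : IsTrans (Fin n) s := ⟨fun _ _ _ h1 h2 => strans h1 h2⟩
  haveI : IsIrrefl (Fin n) s := ⟨sirr⟩
  haveI : IsTrans (Fin n) (flip s) := ⟨fun _ _ _ h1 h2 => strans h2 h1⟩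
  haveI : IsIrrefl (Fin n) (flip s) := ⟨sirr⟩
  have hwf : WellFounded s := Finite.wellFounded_of_trans_of_irrefl s
  have hwf' : WellFounded (flip s) := Finite.wellFounded_of_trans_of_irrefl (flip s)
  obtain ⟨j, -, hj⟩ := hwf.has_min Set.univ Set.univ_nonempty
  obtain ⟨i, -, hi⟩ := hwf'.has_min Set.univ Set.univ_nonempty
  refine ⟨i, j, ?_, ?_⟩
  · have hx : G.neighborFinset (P.x i) = {P.y i} := by
      ext w
      simp only [SimpleGraph.mem_neighborFinset, Finset.mem_singleton]
      constructor
      · intro hw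
        rcases P.cover w with ⟨k, rfl⟩ | ⟨b, rfl⟩
        · exact absurd hw (P.xIndep i k)
        · by_cases hbi : b = i
          · subst hbi; rfl
          · exact absurd ⟨hw, fun h => hbi h.symm⟩ (hi b (Set.mem_univ b))
      · rintro rfl; exact P.matching i
    rw [SimpleGraph.degree, hx, Finset.card_singleton]
  · have hy : G.neighborFinset (P.y j) = {P.x j} := by
      ext w
      simp only [SimpleGraph.mem_neighborFinset, Finset.mem_singleton]
      constructor
      · intro hw
        rcases P.cover w with ⟨k, rfl⟩ | ⟨b, rfl⟩
        · by_cases hkj : k = j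
          · subst hkj; rfl
          · exact absurd ⟨hw.symm, hkj⟩ (hj k (Set.mem_univ k))
        · exact absurd hw.symm (P.yIndep b j)
      · rintro rfl; exact (P.matching j).symm
    rw [SimpleGraph.degree, hy, Finset.card_singleton]
end

section
/- Let G be a bipartite graph without isolated vertices admitting a pure order. Then G has a cross-free pure order if and only if G has a pure order X = {x_1, …, x_n}, Y = {y_1, …, y_n} such that every edge x_i y_j of G satisfies i ≤ j. (By the Herzog–Hibi criterion, the latter condition is equivalent to the independence complex Ind(G) being Cohen-Macaulay.) -/
/-- Type synonym for `Fin n`, used to carry a custom linear order. -/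
def FinSyn (n : ℕ) : Type := Fin n

/-- Any partial order relation on `Fin n` admits a linear extension realized by a
permutation of `Fin n`. -/
lemma exists_perm_monotone {n : ℕ} (r : Fin n → Fin n → Prop)
    (hpo : IsPartialOrder (Fin n) r) :
    ∃ σ : Equiv.Perm (Fin n), ∀ i j, r i j → σ i ≤ σ j := by
  obtain ⟨s, hlin, hrs⟩ := extend_partialOrder r
  haveI := hlin
  letI : Fintype (FinSyn n) := Fintype.ofEquiv (Fin n) (Equiv.refl _)
  letI : LinearOrder (FinSyn n) :=
    { le := s
      lt := fun a b => s a b ∧ ¬ s b a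
      le_refl := fun a => refl_of s a
      le_trans := fun a b c h1 h2 => trans_of s h1 h2
      le_antisymm := fun a b h1 h2 => antisymm_of s h1 h2
      le_total := fun a b => total_of s a b
      lt_iff_le_not_ge := fun _ _ => Iff.rfl
      toDecidableLE := fun a b => Classical.dec _ }
  have hcard : Fintype.card (FinSyn n) = n := by
    exact (Fintype.ofEquiv_card _).trans (Fintype.card_fin n)
  let e : Fin n ≃o FinSyn n := monoEquivOfFin (FinSyn n) hcard
  refine ⟨((Equiv.refl (Fin n) : Fin n ≃ FinSyn n)).trans e.symm.toEquiv, fun i j hij => ?_⟩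
  exact e.symm.monotone (hrs _ _ hij)

/-- A bipartite graph admitting a pure order has a cross-free pure order if and only if it
has a pure order in which every edge `x_i y_j` satisfies `i ≤ j` (by the Herzog–Hibi
criterion, the latter is equivalent to the independence complex being Cohen-Macaulay). -/
theorem crossFree_iff_CM_order {V : Type*} [Fintype V] (G : SimpleGraph V)
    (hex : ∃ n : ℕ, Nonempty (PureOrder G n)) :
    (∃ (n : ℕ) (P : PureOrder G n), ¬ P.HasCross) ↔
    (∃ (n : ℕ) (P : PureOrder G n), ∀ i j, G.Adj (P.x i) (P.y j) → i ≤ j) := by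
  constructor
  · rintro ⟨n, P, hcf⟩
    -- the relation `i ≼ j ↔ i = j ∨ x_i y_j ∈ E`
    set r : Fin n → Fin n → Prop := fun i j => i = j ∨ G.Adj (P.x i) (P.y j) with hr
    have rtrans : ∀ i j k, r i j → r j k → r i k := by
      rintro i j k (rfl | hij) h2
      · exact h2
      rcases h2 with rfl | hjk
      · exact Or.inr hij
      by_cases hik : i = k
      · subst hik
        by_cases hij' : i = j
        · exact Or.inr (hij' ▸ hjk)
        · exact absurd ⟨i, j, hij', hij, hjk⟩ hcf
      by_cases hij' : i = j
      · exact Or.inr (hij' ▸ hjk)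
      by_cases hjk' : j = k
      · exact Or.inr (hjk' ▸ hij)
      exact Or.inr (P.pureCond i j k hij' hjk' hik hij hjk)
    have hpo : IsPartialOrder (Fin n) r :=
      { refl := fun i => Or.inl rfl
        trans := rtrans
        antisymm := by
          rintro i j (rfl | hij) h2
          · rfl
          rcases h2 with rfl | hji
          · rfl
          by_contra hne
          exact hcf ⟨i, j, hne, hij, hji⟩ }
    obtain ⟨σ, hσ⟩ := exists_perm_monotone r hpo
    refine ⟨n, ⟨P.x ∘ σ.symm, P.y ∘ σ.symm, ?_, ?_, ?_, ?_, ?_, ?_⟩, ?_⟩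
    · have heq : Sum.elim (P.x ∘ σ.symm) (P.y ∘ σ.symm)
          = Sum.elim P.x P.y ∘ Sum.map σ.symm σ.symm := by
        ext a; cases a <;> rfl
      rw [heq]
      exact P.inj.comp (σ.symm.injective.sumMap σ.symm.injective)
    · intro v
      rcases P.cover v with ⟨i, hi⟩ | ⟨i, hi⟩
      · exact Or.inl ⟨σ i, by simp [hi]⟩
      · exact Or.inr ⟨σ i, by simp [hi]⟩
    · intro i j; exact P.xIndep _ _
    · intro i j; exact P.yIndep _ _
    · intro i; exact P.matching _
    · intro i j k hij hjk hik h1 h2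
      exact P.pureCond _ _ _ (fun h => hij (σ.symm.injective h))
        (fun h => hjk (σ.symm.injective h)) (fun h => hik (σ.symm.injective h)) h1 h2
    · intro i j h
      have := hσ (σ.symm i) (σ.symm j) (Or.inr h)
      simpa using this
  · rintro ⟨n, P, h⟩
    refine ⟨n, P, ?_⟩
    rintro ⟨i, j, hij, h1, h2⟩
    exact hij (le_antisymm (h _ _ h1) (h _ _ h2))
end

section
/- Let G be a bipartite graph without isolated vertices with a pure order X = {x_1, …, x_n}, Y = {y_1, …, y_n} that has a cross x_a y_b, x_b y_a (a ≠ b). Then the open neighborhoods satisfy N_G(x_a) = N_G(x_b) and N_G(y_a) = N_G(y_b). -/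
lemma aux_x {V : Type*} (G : SimpleGraph V) {n : ℕ}
    (P : PureOrder G n) (a b : Fin n) (hab : a ≠ b)
    (h1 : G.Adj (P.x a) (P.y b)) (h2 : G.Adj (P.x b) (P.y a)) :
    G.neighborSet (P.x a) ⊆ G.neighborSet (P.x b) := by
  intro v hv
  simp only [SimpleGraph.mem_neighborSet] at hv ⊢
  rcases P.cover v with ⟨k, rfl⟩ | ⟨k, rfl⟩
  · exact absurd hv (P.xIndep a k)
  · rcases eq_or_ne k a with rfl | hka
    · exact h2
    rcases eq_or_ne k b with rfl | hkb
    · exact P.matching k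
    exact P.pureCond b a k hab.symm hka.symm hkb.symm h2 hv

lemma aux_y {V : Type*} (G : SimpleGraph V) {n : ℕ}
    (P : PureOrder G n) (a b : Fin n) (hab : a ≠ b)
    (h1 : G.Adj (P.x a) (P.y b)) (h2 : G.Adj (P.x b) (P.y a)) :
    G.neighborSet (P.y a) ⊆ G.neighborSet (P.y b) := by
  intro v hv
  simp only [SimpleGraph.mem_neighborSet] at hv ⊢
  rcases P.cover v with ⟨k, rfl⟩ | ⟨k, rfl⟩
  swap
  · exact absurd hv (P.yIndep a k)
  · rw [G.adj_comm] at hv ⊢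
    rcases eq_or_ne k a with rfl | hka
    · exact h1
    rcases eq_or_ne k b with rfl | hkb
    · exact P.matching k
    exact P.pureCond k a b hka hab hkb hv h1

/-- If a pure order of a bipartite graph `G` has a cross `x_a y_b`, `x_b y_a` (`a ≠ b`),
then `N_G(x_a) = N_G(x_b)` and `N_G(y_a) = N_G(y_b)`. -/
theorem neighborSet_eq_of_cross {V : Type*} [Fintype V] (G : SimpleGraph V) {n : ℕ}
    (P : PureOrder G n) (a b : Fin n) (hab : a ≠ b)
    (h1 : G.Adj (P.x a) (P.y b)) (h2 : G.Adj (P.x b) (P.y a)) :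
    G.neighborSet (P.x a) = G.neighborSet (P.x b) ∧
      G.neighborSet (P.y a) = G.neighborSet (P.y b) := by
  exact ⟨Set.Subset.antisymm (aux_x G P a b hab h1 h2) (aux_x G P b a hab.symm h2 h1),
    Set.Subset.antisymm (aux_y G P a b hab h1 h2) (aux_y G P b a hab.symm h2 h1)⟩
end

section
/- Let G be a bipartite graph without isolated vertices admitting a pure order X = {x_1, …, x_n}, Y = {y_1, …, y_n} that has a cross x_a y_b, x_b y_a (a ≠ b), and suppose G is not a complete bipartite graph K_{n,n}. Then there exists a vertex v of G, distinct from and non-adjacent to each of x_a, x_b, y_a, y_b, such that the induced subgraph of G on the vertices outside {v} ∪ N_G(v) still contains the cross edges x_a y_b and x_b y_a. (This is the key step showing that such a graph has a vertex link with non-Cohen-Macaulay independence complex, hence that its independence complex is not Buchsbaum.) -/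
/-- If a pure order of a bipartite graph `G` has a cross `x_a y_b`, `x_b y_a` (`a ≠ b`) and
`G` is not the complete bipartite graph `K_{n,n}`, then there exists a vertex `v`, distinct
from and non-adjacent to each of `x_a, x_b, y_a, y_b`, such that the induced subgraph of `G`
on the vertices outside `{v} ∪ N_G(v)` still contains the two cross edges. -/
theorem exists_vertex_outside_cross {V : Type*} [Fintype V] (G : SimpleGraph V) {n : ℕ}
    (P : PureOrder G n) (a b : Fin n) (hab : a ≠ b)
    (h1 : G.Adj (P.x a) (P.y b)) (h2 : G.Adj (P.x b) (P.y a))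
    (hncomplete : ¬ ∀ i j, G.Adj (P.x i) (P.y j)) :
    ∃ v : V,
      (v ≠ P.x a ∧ v ≠ P.x b ∧ v ≠ P.y a ∧ v ≠ P.y b) ∧
      (¬ G.Adj v (P.x a) ∧ ¬ G.Adj v (P.x b) ∧ ¬ G.Adj v (P.y a) ∧ ¬ G.Adj v (P.y b)) ∧
      ∃ (hxa : P.x a ∈ {u : V | u ≠ v ∧ ¬ G.Adj v u})
        (hxb : P.x b ∈ {u : V | u ≠ v ∧ ¬ G.Adj v u})
        (hya : P.y a ∈ {u : V | u ≠ v ∧ ¬ G.Adj v u})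
        (hyb : P.y b ∈ {u : V | u ≠ v ∧ ¬ G.Adj v u}),
        (G.induce {u : V | u ≠ v ∧ ¬ G.Adj v u}).Adj ⟨P.x a, hxa⟩ ⟨P.y b, hyb⟩ ∧
        (G.induce {u : V | u ≠ v ∧ ¬ G.Adj v u}).Adj ⟨P.x b, hxb⟩ ⟨P.y a, hya⟩ := by
  have hxinj : ∀ i j : Fin n, P.x i = P.x j → i = j := by
    intro i j h
    have := P.inj (a₁ := Sum.inl i) (a₂ := Sum.inl j) h
    simpa using this
  have hyinj : ∀ i j : Fin n, P.y i = P.y j → i = j := by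
    intro i j h
    have := P.inj (a₁ := Sum.inr i) (a₂ := Sum.inr j) h
    simpa using this
  have hxy : ∀ i j : Fin n, P.x i ≠ P.y j := by
    intro i j h
    have := P.inj (a₁ := Sum.inl i) (a₂ := Sum.inr j) h
    simpa using this
  by_cases hX : ∃ i, i ≠ a ∧ i ≠ b ∧ ¬ G.Adj (P.x i) (P.y a) ∧ ¬ G.Adj (P.x i) (P.y b)
  · obtain ⟨i, hia, hib, hna, hnb⟩ := hX
    refine ⟨P.x i, ⟨fun h => hia (hxinj _ _ h), fun h => hib (hxinj _ _ h),
      hxy i a, hxy i b⟩, ⟨P.xIndep i a, P.xIndep i b, hna, hnb⟩,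
      ⟨fun h => hia (hxinj _ _ h.symm), P.xIndep i a⟩,
      ⟨fun h => hib (hxinj _ _ h.symm), P.xIndep i b⟩,
      ⟨fun h => hxy i a h.symm, hna⟩,
      ⟨fun h => hxy i b h.symm, hnb⟩, h1, h2⟩
  · by_cases hY : ∃ j, j ≠ a ∧ j ≠ b ∧ ¬ G.Adj (P.x a) (P.y j) ∧ ¬ G.Adj (P.x b) (P.y j)
    · obtain ⟨j, hja, hjb, hna, hnb⟩ := hY
      refine ⟨P.y j, ⟨fun h => hxy a j h.symm, fun h => hxy b j h.symm,
        fun h => hja (hyinj _ _ h), fun h => hjb (hyinj _ _ h)⟩,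
        ⟨fun h => hna h.symm, fun h => hnb h.symm, P.yIndep j a, P.yIndep j b⟩,
        ⟨fun h => hxy a j h, fun h => hna h.symm⟩,
        ⟨fun h => hxy b j h, fun h => hnb h.symm⟩,
        ⟨fun h => hja (hyinj _ _ h.symm), P.yIndep j a⟩,
        ⟨fun h => hjb (hyinj _ _ h.symm), P.yIndep j b⟩, h1, h2⟩
    · exfalso
      push_neg at hX hY
      -- every x_i (i ∉ {a,b}) is adjacent to both y_a and y_b
      have hXboth : ∀ i, i ≠ a → i ≠ b → G.Adj (P.x i) (P.y a) ∧ G.Adj (P.x i) (P.y b) := by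
        intro i hia hib
        rcases Classical.em (G.Adj (P.x i) (P.y a)) with h | h
        · exact ⟨h, P.pureCond i a b hia hab hib h h1⟩
        · have hb := hX i hia hib h
          exact ⟨P.pureCond i b a hib hab.symm hia hb h2, hb⟩
      have hYboth : ∀ j, j ≠ a → j ≠ b → G.Adj (P.x a) (P.y j) ∧ G.Adj (P.x b) (P.y j) := by
        intro j hja hjb
        rcases Classical.em (G.Adj (P.x a) (P.y j)) with h | h
        · exact ⟨h, P.pureCond b a j hab.symm hja.symm (Ne.symm hjb) h2 h⟩
        · have hb := hY j hja hjb h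
          exact ⟨P.pureCond a b j hab hjb.symm (Ne.symm hja) h1 hb, hb⟩
      apply hncomplete
      intro i j
      rcases Classical.em (i = j) with rfl | hij
      · exact P.matching i
      rcases Classical.em (i = a) with rfl | hia
      · rcases Classical.em (j = b) with rfl | hjb
        · exact h1
        · exact (hYboth j (Ne.symm hij) hjb).1
      rcases Classical.em (i = b) with rfl | hib
      · rcases Classical.em (j = a) with rfl | hja
        · exact h2
        · exact (hYboth j hja (Ne.symm hij)).2
      rcases Classical.em (j = a) with rfl | hja
      · exact (hXboth i hia hib).1
      rcases Classical.em (j = b) with rfl | hjb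
      · exact (hXboth i hia hib).2
      · exact P.pureCond i a j hia (Ne.symm hja) hij (hXboth i hia hib).1 (hYboth j hja hjb).1
end

section
/- Let G be a bipartite graph whose vertex set is tri-partitioned as X = {x_1, …, x_n}, Y = {y_1, …, y_n}, Z = {z_1, …, z_m}, where Z consists exactly of the isolated vertices of G, X and Y form a pure order of G ∖ Z, and every edge x_i y_j of G satisfies i ≤ j. Let Ǧ be the compression of G. Then for every j with 0 ≤ j ≤ n+m, the number of independent sets of cardinality j in G equals Σ_{i=0}^{j} C(n+m−i, j−i) · (the number of independent sets of cardinality i in Ǧ); equivalently, the h-vector of Ind(G) (which is pure of dimension n+m−1) equals the face vector of Ind(Ǧ). -/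
/-- The compression `Ǧ` of a bipartite graph `G` with vertices `x_1, …, x_n`,
`y_1, …, y_n` (and isolated vertices): the graph on `{x_1, …, x_n}` (encoded as `Fin n`)
whose edges are the pairs `x_i x_j` with `i < j` such that `x_i y_j` is an edge of `G`. -/
def compression {V : Type*} {n : ℕ} (G : SimpleGraph V) (x y : Fin n → V) :
    SimpleGraph (Fin n) :=
  SimpleGraph.fromRel fun i j => i < j ∧ G.Adj (x i) (y j)

namespace CompAux
open Finset
open scoped Classical

variable {V : Type*} {n m : ℕ}

noncomputable def pre {k : ℕ} (f : Fin k → V) (T : Finset V) : Finset (Fin k) :=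
  univ.filter (fun i => f i ∈ T)

lemma mem_pre {k : ℕ} {f : Fin k → V} {T : Finset V} {i : Fin k} :
    i ∈ pre f T ↔ f i ∈ T := by simp [pre]

noncomputable def maxQ (G : SimpleGraph V) (x y : Fin n → V) (T : Finset V) : Finset (Fin n) :=
  (pre y T).filter (fun q => ∀ b ∈ pre y T, G.Adj (x q) (y b) → b = q)

def Sind (G : SimpleGraph V) (x y : Fin n → V) (S : Finset (Fin n)) : Prop :=
  ∀ i ∈ S, ∀ j ∈ S, i ≠ j → ¬ G.Adj (x i) (y j)

noncomputable def leftPart (C : Finset (Fin n ⊕ Fin m)) : Finset (Fin n) :=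
  univ.filter (fun a => Sum.inl a ∈ C)

noncomputable def rightPart (C : Finset (Fin n ⊕ Fin m)) : Finset (Fin m) :=
  univ.filter (fun b => Sum.inr b ∈ C)

noncomputable def Bof (S : Finset (Fin n)) (C : Finset (Fin n ⊕ Fin m)) : Finset (Fin n) :=
  S ∪ leftPart C

noncomputable def Qof (G : SimpleGraph V) (x y : Fin n → V) (S : Finset (Fin n))
    (C : Finset (Fin n ⊕ Fin m)) : Finset (Fin n) :=
  (Bof S C).filter (fun b => ∃ s ∈ S, G.Adj (x b) (y s))

noncomputable def fwd (G : SimpleGraph V) (x y : Fin n → V) (z : Fin m → V) (T : Finset V) :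
    Finset (Fin n) × Finset (Fin n ⊕ Fin m) :=
  (maxQ G x y T,
    ((pre x T ∪ pre y T) \ maxQ G x y T).image Sum.inl ∪ (pre z T).image Sum.inr)

noncomputable def bwd (G : SimpleGraph V) (x y : Fin n → V) (z : Fin m → V)
    (p : Finset (Fin n) × Finset (Fin n ⊕ Fin m)) : Finset V :=
  ((Bof p.1 p.2 \ Qof G x y p.1 p.2).image x ∪ (Qof G x y p.1 p.2).image y)
    ∪ (rightPart p.2).image z

section Inj
variable {x y : Fin n → V} {z : Fin m → V}

lemma xinj (hinj : Function.Injective (Sum.elim (Sum.elim x y) z)) :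
    Function.Injective x := fun i j h => by
  have h2 : Sum.elim (Sum.elim x y) z (Sum.inl (Sum.inl i))
      = Sum.elim (Sum.elim x y) z (Sum.inl (Sum.inl j)) := by simpa using h
  simpa using hinj h2

lemma yinj (hinj : Function.Injective (Sum.elim (Sum.elim x y) z)) :
    Function.Injective y := fun i j h => by
  have h2 : Sum.elim (Sum.elim x y) z (Sum.inl (Sum.inr i))
      = Sum.elim (Sum.elim x y) z (Sum.inl (Sum.inr j)) := by simpa using h
  simpa using hinj h2

lemma zinj (hinj : Function.Injective (Sum.elim (Sum.elim x y) z)) :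
    Function.Injective z := fun i j h => by
  have h2 : Sum.elim (Sum.elim x y) z (Sum.inr i)
      = Sum.elim (Sum.elim x y) z (Sum.inr j) := by simpa using h
  simpa using hinj h2

lemma xney (hinj : Function.Injective (Sum.elim (Sum.elim x y) z)) (i j : Fin n) :
    x i ≠ y j := fun h => by
  have h2 : Sum.elim (Sum.elim x y) z (Sum.inl (Sum.inl i))
      = Sum.elim (Sum.elim x y) z (Sum.inl (Sum.inr j)) := by simpa using h
  simpa using hinj h2

lemma xnez (hinj : Function.Injective (Sum.elim (Sum.elim x y) z)) (i : Fin n) (j : Fin m) :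
    x i ≠ z j := fun h => by
  have h2 : Sum.elim (Sum.elim x y) z (Sum.inl (Sum.inl i))
      = Sum.elim (Sum.elim x y) z (Sum.inr j) := by simpa using h
  simpa using hinj h2

lemma ynez (hinj : Function.Injective (Sum.elim (Sum.elim x y) z)) (i : Fin n) (j : Fin m) :
    y i ≠ z j := fun h => by
  have h2 : Sum.elim (Sum.elim x y) z (Sum.inl (Sum.inr i))
      = Sum.elim (Sum.elim x y) z (Sum.inr j) := by simpa using h
  simpa using hinj h2

end Inj

section Mem
variable {x y : Fin n → V} {z : Fin m → V}
lemma mem_triple_x (hinj : Function.Injective (Sum.elim (Sum.elim x y) z)) {P Q : Finset (Fin n)} {R : Finset (Fin m)} {a : Fin n} :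
    x a ∈ (P.image x ∪ Q.image y) ∪ R.image z ↔ a ∈ P := by
  simp only [mem_union, mem_image]
  constructor
  · rintro ((⟨i, hi, hix⟩ | ⟨i, hi, hiy⟩) | ⟨i, hi, hiz⟩)
    · rwa [xinj hinj hix.symm]
    · exact absurd hiy.symm (xney hinj a i)
    · exact absurd hiz.symm (xnez hinj a i)
  · exact fun h => Or.inl (Or.inl ⟨a, h, rfl⟩)

lemma mem_triple_y (hinj : Function.Injective (Sum.elim (Sum.elim x y) z)) {P Q : Finset (Fin n)} {R : Finset (Fin m)} {a : Fin n} :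
    y a ∈ (P.image x ∪ Q.image y) ∪ R.image z ↔ a ∈ Q := by
  simp only [mem_union, mem_image]
  constructor
  · rintro ((⟨i, hi, hix⟩ | ⟨i, hi, hiy⟩) | ⟨i, hi, hiz⟩)
    · exact absurd hix (xney hinj i a)
    · rwa [yinj hinj hiy.symm]
    · exact absurd hiz.symm (ynez hinj a i)
  · exact fun h => Or.inl (Or.inr ⟨a, h, rfl⟩)

lemma mem_triple_z (hinj : Function.Injective (Sum.elim (Sum.elim x y) z)) {P Q : Finset (Fin n)} {R : Finset (Fin m)} {a : Fin m} :
    z a ∈ (P.image x ∪ Q.image y) ∪ R.image z ↔ a ∈ R := by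
  simp only [mem_union, mem_image]
  constructor
  · rintro ((⟨i, hi, hix⟩ | ⟨i, hi, hiy⟩) | ⟨i, hi, hiz⟩)
    · exact absurd hix (xnez hinj i a)
    · exact absurd hiy (ynez hinj i a)
    · rwa [zinj hinj hiz.symm]
  · exact fun h => Or.inr ⟨a, h, rfl⟩

lemma card_triple (hinj : Function.Injective (Sum.elim (Sum.elim x y) z)) {P Q : Finset (Fin n)} {R : Finset (Fin m)} :
    ((P.image x ∪ Q.image y) ∪ R.image z).card = P.card + Q.card + R.card := by
  have d1 : Disjoint (P.image x) (Q.image y) := by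
    simp only [disjoint_left, mem_image]
    rintro v ⟨i, hi, rfl⟩ ⟨j, hj, hji⟩
    exact xney hinj i j hji.symm
  have d2 : Disjoint (P.image x ∪ Q.image y) (R.image z) := by
    simp only [disjoint_left, mem_union, mem_image]
    rintro v (⟨i, hi, rfl⟩ | ⟨i, hi, rfl⟩) ⟨j, hj, hji⟩
    · exact xnez hinj i j hji.symm
    · exact ynez hinj i j hji.symm
  rw [card_union_of_disjoint d2, card_union_of_disjoint d1,
    card_image_of_injective _ (xinj hinj), card_image_of_injective _ (yinj hinj),
    card_image_of_injective _ (zinj hinj)]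

lemma decomp (hcover : ∀ v : V, (∃ i, v = x i) ∨ (∃ i, v = y i) ∨ (∃ i, v = z i))
    (T : Finset V) :
    T = ((pre x T).image x ∪ (pre y T).image y) ∪ (pre z T).image z := by
  ext v
  simp only [mem_union, mem_image, mem_pre]
  constructor
  · intro hv
    rcases hcover v with ⟨i, rfl⟩ | ⟨i, rfl⟩ | ⟨i, rfl⟩
    · exact Or.inl (Or.inl ⟨i, hv, rfl⟩)
    · exact Or.inl (Or.inr ⟨i, hv, rfl⟩)
    · exact Or.inr ⟨i, hv, rfl⟩
  · rintro ((⟨i, hi, rfl⟩ | ⟨i, hi, rfl⟩) | ⟨i, hi, rfl⟩) <;> exact hi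

end Mem

section Graph
variable {G : SimpleGraph V} {x y : Fin n → V} {z : Fin m → V}

lemma rtrans (hmatching : ∀ i, G.Adj (x i) (y i))
    (hpure : ∀ i j k, i ≠ j → j ≠ k → i ≠ k →
      G.Adj (x i) (y j) → G.Adj (x j) (y k) → G.Adj (x i) (y k))
    {i j k : Fin n} (h1 : G.Adj (x i) (y j)) (h2 : G.Adj (x j) (y k)) :
    G.Adj (x i) (y k) := by
  by_cases hij : i = j
  · subst hij; exact h2
  by_cases hjk : j = k
  · subst hjk; exact h1
  by_cases hik : i = k
  · subst hik; exact hmatching i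
  exact hpure i j k hij hjk hik h1 h2

lemma rantisymm (hle : ∀ i j, G.Adj (x i) (y j) → i ≤ j) {i j : Fin n}
    (h1 : G.Adj (x i) (y j)) (h2 : G.Adj (x j) (y i)) : i = j :=
  le_antisymm (hle i j h1) (hle j i h2)

lemma indep_iff (hinj : Function.Injective (Sum.elim (Sum.elim x y) z))
    (hcover : ∀ v : V, (∃ i, v = x i) ∨ (∃ i, v = y i) ∨ (∃ i, v = z i))
    (hz : ∀ i u, ¬ G.Adj (z i) u)
    (hxIndep : ∀ i j, ¬ G.Adj (x i) (x j))
    (hyIndep : ∀ i j, ¬ G.Adj (y i) (y j)) (T : Finset V) :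
    IsIndep G T ↔ ∀ i j, x i ∈ T → y j ∈ T → ¬ G.Adj (x i) (y j) := by
  constructor
  · intro h i j hxi hyj
    exact h _ hxi _ hyj
  · intro h u hu v hv hadj
    rcases hcover u with ⟨i, rfl⟩ | ⟨i, rfl⟩ | ⟨i, rfl⟩ <;>
      rcases hcover v with ⟨j, rfl⟩ | ⟨j, rfl⟩ | ⟨j, rfl⟩
    · exact hxIndep i j hadj
    · exact h i j hu hv hadj
    · exact hz j _ hadj.symm
    · exact h j i hv hu hadj.symm
    · exact hyIndep i j hadj
    · exact hz j _ hadj.symm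
    · exact hz i _ hadj
    · exact hz i _ hadj
    · exact hz i _ hadj

lemma comp_indep_iff (hle : ∀ i j, G.Adj (x i) (y j) → i ≤ j) (S : Finset (Fin n)) :
    IsIndep (compression G x y) S ↔ Sind G x y S := by
  constructor
  · intro h i hi j hj hne hadj
    apply h _ hi _ hj
    rw [compression, SimpleGraph.fromRel_adj]
    exact ⟨hne, Or.inl ⟨lt_of_le_of_ne (hle i j hadj) hne, hadj⟩⟩
  · intro h u hu v hv hadj
    rw [compression, SimpleGraph.fromRel_adj] at hadj
    obtain ⟨hne, h1 | h2⟩ := hadj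
    · exact h u hu v hv hne h1.2
    · exact h v hv u hu hne.symm h2.2

lemma sind_maxQ (T : Finset V) : Sind G x y (maxQ G x y T) := by
  intro i hi j hj hne hadj
  simp only [maxQ, mem_filter] at hi hj
  exact hne (hi.2 j hj.1 hadj).symm

lemma exists_max (hmatching : ∀ i, G.Adj (x i) (y i))
    (hpure : ∀ i j k, i ≠ j → j ≠ k → i ≠ k →
      G.Adj (x i) (y j) → G.Adj (x j) (y k) → G.Adj (x i) (y k))
    (hle : ∀ i j, G.Adj (x i) (y j) → i ≤ j)
    {T : Finset V} {q : Fin n} (hq : q ∈ pre y T) :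
    ∃ s ∈ maxQ G x y T, G.Adj (x q) (y s) := by
  set M := (pre y T).filter (fun b => G.Adj (x q) (y b)) with hM
  have hqM : q ∈ M := mem_filter.2 ⟨hq, hmatching q⟩
  have hne : M.Nonempty := ⟨q, hqM⟩
  have hb0M := mem_filter.1 (M.max'_mem hne)
  refine ⟨M.max' hne, ?_, hb0M.2⟩
  rw [maxQ, mem_filter]
  refine ⟨hb0M.1, fun b hb hadj => ?_⟩
  have hqb : G.Adj (x q) (y b) := rtrans hmatching hpure hb0M.2 hadj
  have hbM : b ∈ M := mem_filter.2 ⟨hb, hqb⟩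
  exact le_antisymm (M.le_max' b hbM) (hle _ b hadj)

end Graph

section BijLemmas
variable {G : SimpleGraph V} {x y : Fin n → V} {z : Fin m → V}

lemma leftright_eq (C : Finset (Fin n ⊕ Fin m)) :
    (leftPart C).image Sum.inl ∪ (rightPart C).image Sum.inr = C := by
  ext c
  cases c with
  | inl a => simp [leftPart, rightPart]
  | inr b => simp [leftPart, rightPart]

lemma card_leftright (C : Finset (Fin n ⊕ Fin m)) :
    (leftPart C).card + (rightPart C).card = C.card := by
  conv_rhs => rw [← leftright_eq C]
  rw [card_union_of_disjoint, card_image_of_injective _ Sum.inl_injective,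
    card_image_of_injective _ Sum.inr_injective]
  simp only [disjoint_left, mem_image]
  rintro c ⟨a, ha, rfl⟩ ⟨b, hb, hba⟩
  exact absurd hba (by simp)

def Dcond (G : SimpleGraph V) (x y : Fin n → V) (j : ℕ)
    (p : Finset (Fin n) × Finset (Fin n ⊕ Fin m)) : Prop :=
  Sind G x y p.1 ∧ (∀ a, Sum.inl a ∈ p.2 → a ∉ p.1) ∧ p.1.card + p.2.card = j

lemma fwd_mem (hinj : Function.Injective (Sum.elim (Sum.elim x y) z))
    (hcover : ∀ v : V, (∃ i, v = x i) ∨ (∃ i, v = y i) ∨ (∃ i, v = z i))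
    (hz : ∀ i u, ¬ G.Adj (z i) u)
    (hxIndep : ∀ i j, ¬ G.Adj (x i) (x j))
    (hyIndep : ∀ i j, ¬ G.Adj (y i) (y j))
    (hmatching : ∀ i, G.Adj (x i) (y i))
    {j : ℕ} {T : Finset V} (hT : IsIndep G T) (hcard : T.card = j) :
    Dcond G x y j (fwd G x y z T) := by
  have hTiff := (indep_iff hinj hcover hz hxIndep hyIndep T).1 hT
  refine ⟨sind_maxQ T, ?_, ?_⟩
  · intro a ha haS
    simp only [fwd, mem_union, mem_image, mem_sdiff] at ha
    rcases ha with ⟨b, hb, hba⟩ | ⟨b, hb, hba⟩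
    · rw [Sum.inl.injEq] at hba; subst hba; exact hb.2 haS
    · exact absurd hba (by simp)
  · have hsub : maxQ G x y T ⊆ pre x T ∪ pre y T :=
      (filter_subset _ _).trans subset_union_right
    have hdisjPQ : Disjoint (pre x T) (pre y T) := by
      rw [disjoint_left]
      intro a hax hay
      exact hTiff a a (mem_pre.1 hax) (mem_pre.1 hay) (hmatching a)
    have h1 : ((pre x T ∪ pre y T) \ maxQ G x y T).card + (maxQ G x y T).card
        = (pre x T ∪ pre y T).card := card_sdiff_add_card_eq_card hsub
    have h2 : (pre x T ∪ pre y T).card = (pre x T).card + (pre y T).card :=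
      card_union_of_disjoint hdisjPQ
    have hTc : T.card = (pre x T).card + (pre y T).card + (pre z T).card := by
      conv_lhs => rw [decomp hcover T]
      exact card_triple hinj
    have hC : (fwd G x y z T).2.card
        = ((pre x T ∪ pre y T) \ maxQ G x y T).card + (pre z T).card := by
      rw [fwd]
      rw [card_union_of_disjoint, card_image_of_injective _ Sum.inl_injective,
        card_image_of_injective _ Sum.inr_injective]
      simp only [disjoint_left, mem_image]
      rintro c ⟨a, ha, rfl⟩ ⟨b, hb, hba⟩
      exact absurd hba (by simp)
    have hfst : (fwd G x y z T).1 = maxQ G x y T := rfl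
    rw [hfst, hC]
    omega

lemma bwd_mem (hinj : Function.Injective (Sum.elim (Sum.elim x y) z))
    (hcover : ∀ v : V, (∃ i, v = x i) ∨ (∃ i, v = y i) ∨ (∃ i, v = z i))
    (hz : ∀ i u, ¬ G.Adj (z i) u)
    (hxIndep : ∀ i j, ¬ G.Adj (x i) (x j))
    (hyIndep : ∀ i j, ¬ G.Adj (y i) (y j))
    (hmatching : ∀ i, G.Adj (x i) (y i))
    (hpure : ∀ i j k, i ≠ j → j ≠ k → i ≠ k →
      G.Adj (x i) (y j) → G.Adj (x j) (y k) → G.Adj (x i) (y k))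
    {j : ℕ} {p : Finset (Fin n) × Finset (Fin n ⊕ Fin m)} (hp : Dcond G x y j p) :
    IsIndep G (bwd G x y z p) ∧ (bwd G x y z p).card = j := by
  obtain ⟨hS, hC, hcard⟩ := hp
  have hQbB : Qof G x y p.1 p.2 ⊆ Bof p.1 p.2 := filter_subset _ _
  constructor
  · rw [indep_iff hinj hcover hz hxIndep hyIndep]
    intro i j' hxi hyj hadj
    simp only [bwd] at hxi hyj
    have hi : i ∈ Bof p.1 p.2 \ Qof G x y p.1 p.2 := (mem_triple_x hinj).1 hxi
    have hj : j' ∈ Qof G x y p.1 p.2 := (mem_triple_y hinj).1 hyj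
    rw [Qof, mem_filter] at hj
    obtain ⟨-, s, hs, hadj2⟩ := hj
    have hiQ : i ∈ Qof G x y p.1 p.2 := by
      rw [Qof, mem_filter]
      exact ⟨(mem_sdiff.1 hi).1, s, hs, rtrans hmatching hpure hadj hadj2⟩
    exact (mem_sdiff.1 hi).2 hiQ
  · have hct : (bwd G x y z p).card = (Bof p.1 p.2 \ Qof G x y p.1 p.2).card
        + (Qof G x y p.1 p.2).card + (rightPart p.2).card := by
      simp only [bwd]
      exact card_triple hinj
    have h1 : (Bof p.1 p.2 \ Qof G x y p.1 p.2).card + (Qof G x y p.1 p.2).card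
        = (Bof p.1 p.2).card := card_sdiff_add_card_eq_card hQbB
    have h2 : (Bof p.1 p.2).card = p.1.card + (leftPart p.2).card := by
      rw [Bof, card_union_of_disjoint]
      rw [disjoint_left]
      intro a ha hal
      rw [leftPart, mem_filter] at hal
      exact hC a hal.2 ha
    have h3 := card_leftright p.2
    omega

lemma bwd_fwd (hinj : Function.Injective (Sum.elim (Sum.elim x y) z))
    (hcover : ∀ v : V, (∃ i, v = x i) ∨ (∃ i, v = y i) ∨ (∃ i, v = z i))
    (hz : ∀ i u, ¬ G.Adj (z i) u)
    (hxIndep : ∀ i j, ¬ G.Adj (x i) (x j))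
    (hyIndep : ∀ i j, ¬ G.Adj (y i) (y j))
    (hmatching : ∀ i, G.Adj (x i) (y i))
    (hpure : ∀ i j k, i ≠ j → j ≠ k → i ≠ k →
      G.Adj (x i) (y j) → G.Adj (x j) (y k) → G.Adj (x i) (y k))
    (hle : ∀ i j, G.Adj (x i) (y j) → i ≤ j)
    {T : Finset V} (hT : IsIndep G T) :
    bwd G x y z (fwd G x y z T) = T := by
  have hTiff := (indep_iff hinj hcover hz hxIndep hyIndep T).1 hT
  have hCl : leftPart (fwd G x y z T).2 = (pre x T ∪ pre y T) \ maxQ G x y T := by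
    ext a
    simp [leftPart, fwd]
  have hCr : rightPart (fwd G x y z T).2 = pre z T := by
    ext a
    simp [rightPart, fwd]
  have hSsub : maxQ G x y T ⊆ pre x T ∪ pre y T :=
    (filter_subset _ _).trans subset_union_right
  have hB : Bof (fwd G x y z T).1 (fwd G x y z T).2 = pre x T ∪ pre y T := by
    rw [Bof, hCl]
    show maxQ G x y T ∪ _ = _
    rw [union_sdiff_of_subset hSsub]
  have hQ : Qof G x y (fwd G x y z T).1 (fwd G x y z T).2 = pre y T := by
    rw [Qof, hB]
    ext b
    simp only [mem_filter, mem_union]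
    constructor
    · rintro ⟨hb | hb, s, hs, hadj⟩
      · have hsY : s ∈ pre y T := filter_subset _ _ hs
        exact absurd hadj (hTiff b s (mem_pre.1 hb) (mem_pre.1 hsY))
      · exact hb
    · intro hb
      exact ⟨Or.inr hb, exists_max hmatching hpure hle hb⟩
  have hPQ : (pre x T ∪ pre y T) \ pre y T = pre x T := by
    ext a
    simp only [mem_sdiff, mem_union]
    constructor
    · rintro ⟨ha | ha, hna⟩
      · exact ha
      · exact absurd ha hna
    · intro ha
      refine ⟨Or.inl ha, fun hay => ?_⟩
      exact hTiff a a (mem_pre.1 ha) (mem_pre.1 hay) (hmatching a)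
  simp only [bwd]
  rw [hQ, hB, hCr, hPQ]
  exact (decomp hcover T).symm

lemma fwd_bwd (hinj : Function.Injective (Sum.elim (Sum.elim x y) z))
    (hmatching : ∀ i, G.Adj (x i) (y i))
    (hpure : ∀ i j k, i ≠ j → j ≠ k → i ≠ k →
      G.Adj (x i) (y j) → G.Adj (x j) (y k) → G.Adj (x i) (y k))
    (hle : ∀ i j, G.Adj (x i) (y j) → i ≤ j)
    {j : ℕ} {p : Finset (Fin n) × Finset (Fin n ⊕ Fin m)} (hp : Dcond G x y j p) :
    fwd G x y z (bwd G x y z p) = p := by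
  obtain ⟨hS, hC, -⟩ := hp
  obtain ⟨S, C⟩ := p
  simp only at hS hC
  have h1 : pre x (bwd G x y z (S, C)) = Bof S C \ Qof G x y S C := by
    ext a
    rw [mem_pre]
    simp only [bwd]
    exact mem_triple_x hinj
  have h2 : pre y (bwd G x y z (S, C)) = Qof G x y S C := by
    ext a
    rw [mem_pre]
    simp only [bwd]
    exact mem_triple_y hinj
  have h3 : pre z (bwd G x y z (S, C)) = rightPart C := by
    ext a
    rw [mem_pre]
    simp only [bwd]
    exact mem_triple_z hinj
  have hQB : Qof G x y S C ⊆ Bof S C := filter_subset _ _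
  have hSQb : S ⊆ Qof G x y S C := by
    intro s hs
    rw [Qof, mem_filter]
    exact ⟨mem_union_left _ hs, s, hs, hmatching s⟩
  have hmax : maxQ G x y (bwd G x y z (S, C)) = S := by
    rw [maxQ, h2]
    ext q
    simp only [mem_filter]
    constructor
    · rintro ⟨hq, hmaxq⟩
      rw [Qof, mem_filter] at hq
      obtain ⟨-, s, hs, hadj⟩ := hq
      have := hmaxq s (hSQb hs) hadj
      exact this ▸ hs
    · intro hq
      refine ⟨hSQb hq, fun b hb hadj => ?_⟩
      have hb' := hb
      rw [Qof, mem_filter] at hb'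
      obtain ⟨-, s', hs', hadj'⟩ := hb'
      have hqs' : G.Adj (x q) (y s') := rtrans hmatching hpure hadj hadj'
      have hqeq : q = s' := by
        by_contra hne
        exact hS q hq s' hs' hne hqs'
      subst hqeq
      exact rantisymm hle hadj' hadj
  have hBS : Bof S C \ S = leftPart C := by
    ext a
    simp only [Bof, mem_sdiff, mem_union, leftPart, mem_filter, mem_univ, true_and]
    constructor
    · rintro ⟨ha | ha, hna⟩
      · exact absurd ha hna
      · exact ha
    · intro ha
      exact ⟨Or.inr ha, fun haS => hC a ha haS⟩
  rw [fwd, hmax, h1, h2, h3, sdiff_union_of_subset hQB, hBS, leftright_eq]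

end BijLemmas

section Main
variable [Fintype V] {G : SimpleGraph V} {x y : Fin n → V} {z : Fin m → V}

lemma main (hinj : Function.Injective (Sum.elim (Sum.elim x y) z))
    (hcover : ∀ v : V, (∃ i, v = x i) ∨ (∃ i, v = y i) ∨ (∃ i, v = z i))
    (hz : ∀ i u, ¬ G.Adj (z i) u)
    (hxIndep : ∀ i j, ¬ G.Adj (x i) (x j))
    (hyIndep : ∀ i j, ¬ G.Adj (y i) (y j))
    (hmatching : ∀ i, G.Adj (x i) (y i))
    (hpure : ∀ i j k, i ≠ j → j ≠ k → i ≠ k →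
      G.Adj (x i) (y j) → G.Adj (x j) (y k) → G.Adj (x i) (y k))
    (hle : ∀ i j, G.Adj (x i) (y j) → i ≤ j) (j : ℕ) :
    indepCount G j =
      ∑ i ∈ Finset.range (j + 1),
        (n + m - i).choose (j - i) * indepCount (compression G x y) i := by
  set A : Finset (Finset V) := univ.filter (fun T => IsIndep G T ∧ T.card = j) with hAdef
  set D : Finset (Finset (Fin n) × Finset (Fin n ⊕ Fin m)) :=
    univ.filter (Dcond G x y j) with hDdef
  set SS : Finset (Finset (Fin n)) := univ.filter (Sind G x y) with hSSdef
  have hA : indepCount G j = A.card := by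
    rw [indepCount, Set.ncard_eq_toFinset_card', Set.toFinset_setOf]
  have hcomp : ∀ i : ℕ, indepCount (compression G x y) i
      = (SS.filter (fun S => S.card = i)).card := by
    intro i
    rw [indepCount, Set.ncard_eq_toFinset_card', Set.toFinset_setOf, hSSdef, filter_filter]
    congr 1
    apply Finset.filter_congr
    intro S _
    rw [comp_indep_iff hle]
  have hAD : A.card = D.card := by
    apply card_nbij' (fwd G x y z) (bwd G x y z)
    · intro T hT
      rw [hAdef, mem_coe, mem_filter] at hT
      rw [hDdef, mem_coe, mem_filter]
      exact ⟨mem_univ _, fwd_mem hinj hcover hz hxIndep hyIndep hmatching hT.2.1 hT.2.2⟩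
    · intro p hp
      rw [hDdef, mem_coe, mem_filter] at hp
      rw [hAdef, mem_coe, mem_filter]
      exact ⟨mem_univ _, bwd_mem hinj hcover hz hxIndep hyIndep hmatching hpure hp.2⟩
    · intro T hT
      rw [hAdef, mem_coe, mem_filter] at hT
      exact bwd_fwd hinj hcover hz hxIndep hyIndep hmatching hpure hle hT.2.1
    · intro p hp
      rw [hDdef, mem_coe, mem_filter] at hp
      exact fwd_bwd hinj hmatching hpure hle hp.2
  have hfib : ∀ S ∈ SS,
      (D.filter (fun p => p.1 = S)).card
        = if S.card ≤ j then (n + m - S.card).choose (j - S.card) else 0 := by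
    intro S hS
    rw [hSSdef, mem_filter] at hS
    by_cases hSj : S.card ≤ j
    · rw [if_pos hSj]
      have hcard1 : (D.filter (fun p => p.1 = S)).card
          = (powersetCard (j - S.card)
              ((univ : Finset (Fin n ⊕ Fin m)) \ S.image Sum.inl)).card := by
        apply card_nbij' (fun p => p.2) (fun Cc => (S, Cc))
        · intro p hp
          simp only [hDdef, mem_coe, mem_filter] at hp
          obtain ⟨⟨-, hSi, hCc, hcd⟩, hp1⟩ := hp
          rw [mem_coe, mem_powersetCard]
          constructor
          · intro c hc
            rw [mem_sdiff]
            refine ⟨mem_univ _, fun hcim => ?_⟩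
            rw [mem_image] at hcim
            obtain ⟨a, haS, rfl⟩ := hcim
            exact hCc a hc (hp1 ▸ haS)
          · rw [hp1] at hcd
            beta_reduce; omega
        · intro Cc hCc
          rw [mem_coe, mem_powersetCard] at hCc
          simp only [mem_coe, mem_filter, hDdef]
          refine ⟨⟨mem_univ _, hS.2, ?_, ?_⟩, trivial⟩
          · intro a ha haS
            have := hCc.1 ha
            rw [mem_sdiff, mem_image] at this
            exact this.2 ⟨a, haS, rfl⟩
          · show S.card + Cc.card = j
            rw [hCc.2]
            omega
        · intro p hp
          rw [mem_coe, mem_filter] at hp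
          rw [← hp.2]
        · intro Cc hCc
          rfl
      rw [hcard1, card_powersetCard, card_sdiff_of_subset (subset_univ _), card_univ,
        Fintype.card_sum, Fintype.card_fin, Fintype.card_fin,
        card_image_of_injective _ Sum.inl_injective]
    · rw [if_neg hSj, card_eq_zero, filter_eq_empty_iff]
      intro p hp
      rw [hDdef, mem_filter] at hp
      intro hp1
      obtain ⟨-, -, -, hcd⟩ := hp
      rw [hp1] at hcd
      omega
  calc indepCount G j = A.card := hA
    _ = D.card := hAD
    _ = ∑ S ∈ SS, (D.filter (fun p => p.1 = S)).card := by
        apply card_eq_sum_card_fiberwise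
        intro p hp
        rw [hDdef, mem_coe, mem_filter] at hp
        rw [hSSdef, mem_coe, mem_filter]
        exact ⟨mem_univ _, hp.2.1⟩
    _ = ∑ S ∈ SS, if S.card ≤ j then (n + m - S.card).choose (j - S.card) else 0 :=
        sum_congr rfl hfib
    _ = ∑ S ∈ SS.filter (fun S => S.card ≤ j), (n + m - S.card).choose (j - S.card) :=
        (sum_filter _ _).symm
    _ = ∑ i ∈ Finset.range (j + 1), ∑ S ∈ (SS.filter (fun S => S.card ≤ j)).filter
          (fun S => S.card = i), (n + m - S.card).choose (j - S.card) := by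
        symm
        apply sum_fiberwise_of_maps_to
        intro S hS
        rw [mem_filter] at hS
        exact mem_range.2 (Nat.lt_succ_of_le hS.2)
    _ = ∑ i ∈ Finset.range (j + 1),
          (n + m - i).choose (j - i) * indepCount (compression G x y) i := by
        refine sum_congr rfl fun i hi => ?_
        have hij : i ≤ j := Nat.lt_succ_iff.1 (mem_range.1 hi)
        have hflt : (SS.filter (fun S => S.card ≤ j)).filter (fun S => S.card = i)
            = SS.filter (fun S => S.card = i) := by
          rw [filter_filter]
          apply Finset.filter_congr
          intro S _
          constructor
          · exact fun h => h.2
          · exact fun h => ⟨h ▸ hij, h⟩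
        rw [hflt]
        have : ∑ S ∈ SS.filter (fun S => S.card = i),
            (n + m - S.card).choose (j - S.card)
            = ∑ S ∈ SS.filter (fun S => S.card = i), (n + m - i).choose (j - i) := by
          apply sum_congr rfl
          intro S hS
          rw [mem_filter] at hS
          rw [hS.2]
        rw [this, sum_const, smul_eq_mul, hcomp i, mul_comm]
end Main
end CompAux

/-- Let `G` be a bipartite graph whose vertex set is tri-partitioned into
`X = {x_1, …, x_n}`, `Y = {y_1, …, y_n}` and the isolated vertices `Z = {z_1, …, z_m}`,
where `X, Y` form a pure order of `G ∖ Z` and every edge `x_i y_j` satisfies `i ≤ j`.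
Then the `h`-vector of `Ind(G)` (pure of dimension `n+m-1`) is the face vector of
`Ind(Ǧ)`: for `0 ≤ j ≤ n+m` the number of independent sets of cardinality `j` in `G`
equals `∑_{i=0}^{j} C(n+m-i, j-i) ·` (number of independent sets of cardinality `i` in
the compression `Ǧ`). -/
theorem compression_h_eq_f {V : Type*} [Fintype V] (G : SimpleGraph V) {n m : ℕ}
    (x y : Fin n → V) (z : Fin m → V)
    (hinj : Function.Injective (Sum.elim (Sum.elim x y) z))
    (hcover : ∀ v : V, (∃ i, v = x i) ∨ (∃ i, v = y i) ∨ (∃ i, v = z i))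
    (hz : ∀ i u, ¬ G.Adj (z i) u)
    (hxIndep : ∀ i j, ¬ G.Adj (x i) (x j))
    (hyIndep : ∀ i j, ¬ G.Adj (y i) (y j))
    (hmatching : ∀ i, G.Adj (x i) (y i))
    (hpure : ∀ i j k, i ≠ j → j ≠ k → i ≠ k →
      G.Adj (x i) (y j) → G.Adj (x j) (y k) → G.Adj (x i) (y k))
    (hle : ∀ i j, G.Adj (x i) (y j) → i ≤ j) :
    ∀ j ≤ n + m,
      indepCount G j =
        ∑ i ∈ Finset.range (j + 1),
          (n + m - i).choose (j - i) * indepCount (compression G x y) i := by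
  intro j _
  exact CompAux.main hinj hcover hz hxIndep hyIndep hmatching hpure hle j
end

section
/- Every bipartite graph G on vertices v_1, …, v_n has an extrusion Ĝ whose independence complex is pure; that is, there is an extrusion Ĝ of G in which every maximal independent set has cardinality exactly n. (Consequently, by the Herzog–Hibi criterion, every bipartite graph is Cohen-Macaulay extrudable.) -/
/-- `H` is an extrusion of the graph `G` on vertices `v_1, …, v_n`: `H` is the bipartite
graph on `x_1, …, x_n` (encoded `Sum.inl`) and `y_1, …, y_n` (encoded `Sum.inr`) whose
edges are the `x_i y_i` together with, for each edge `v_i v_j` of `G`, exactly one of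
`x_i y_j` or `x_j y_i`, and no other edges. -/
def IsExtrusion {n : ℕ} (G : SimpleGraph (Fin n)) (H : SimpleGraph (Fin n ⊕ Fin n)) :
    Prop :=
  (∀ i j, ¬ H.Adj (Sum.inl i) (Sum.inl j)) ∧
  (∀ i j, ¬ H.Adj (Sum.inr i) (Sum.inr j)) ∧
  (∀ i, H.Adj (Sum.inl i) (Sum.inr i)) ∧
  (∀ i j, i ≠ j →
    ((H.Adj (Sum.inl i) (Sum.inr j) ∨ H.Adj (Sum.inl j) (Sum.inr i)) ↔ G.Adj i j)) ∧
  (∀ i j, i ≠ j → ¬ (H.Adj (Sum.inl i) (Sum.inr j) ∧ H.Adj (Sum.inl j) (Sum.inr i)))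

lemma fin2_ne {a b : Fin 2} (h : a ≠ b) : a = 0 ∨ b = 0 := by
  revert h; revert a b; decide

/-- Every bipartite graph `G` on `n` vertices has an extrusion whose independence complex
is pure: every maximal independent set has cardinality exactly `n` (hence, by the
Herzog–Hibi criterion, every bipartite graph is Cohen-Macaulay extrudable). -/
theorem bipartite_extrudable {n : ℕ} (G : SimpleGraph (Fin n)) (hG : G.Colorable 2) :
    ∃ H : SimpleGraph (Fin n ⊕ Fin n), IsExtrusion G H ∧
      ∀ s : Finset (Fin n ⊕ Fin n), IsIndep H s →
        (∀ s', IsIndep H s' → s ⊆ s' → s = s') → s.card = n := by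
  obtain ⟨C⟩ := hG
  set r : (Fin n ⊕ Fin n) → (Fin n ⊕ Fin n) → Prop := fun a b =>
    match a, b with
    | Sum.inl i, Sum.inr j => i = j ∨ (G.Adj i j ∧ C i = 0)
    | _, _ => False with hr
  set H := SimpleGraph.fromRel r with hH
  have hll : ∀ i j, ¬ H.Adj (Sum.inl i) (Sum.inl j) := by
    intro i j h
    rcases h with ⟨-, h | h⟩ <;> exact h
  have hrr : ∀ i j, ¬ H.Adj (Sum.inr i) (Sum.inr j) := by
    intro i j h
    rcases h with ⟨-, h | h⟩ <;> exact h
  have hlr : ∀ i j, H.Adj (Sum.inl i) (Sum.inr j) ↔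
      (i = j ∨ (G.Adj i j ∧ C i = 0)) := by
    intro i j
    constructor
    · rintro ⟨-, h | h⟩
      · exact h
      · exact absurd h (by simp [hr])
    · intro h
      exact ⟨by simp, Or.inl h⟩
  have hdiag : ∀ i, H.Adj (Sum.inl i) (Sum.inr i) := fun i => (hlr i i).2 (Or.inl rfl)
  refine ⟨H, ⟨hll, hrr, hdiag, ?_, ?_⟩, ?_⟩
  · intro i j hij
    rw [hlr, hlr]
    constructor
    · rintro ((h | ⟨h, -⟩) | (h | ⟨h, -⟩))
      · exact absurd h hij
      · exact h
      · exact absurd h.symm hij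
      · exact h.symm
    · intro h
      rcases fin2_ne (C.valid h) with h0 | h0
      · exact Or.inl (Or.inr ⟨h, h0⟩)
      · exact Or.inr (Or.inr ⟨h.symm, h0⟩)
  · intro i j hij ⟨h1, h2⟩
    rw [hlr] at h1 h2
    rcases h1 with h1 | ⟨ha, h1⟩
    · exact hij h1
    rcases h2 with h2 | ⟨-, h2⟩
    · exact hij h2.symm
    exact C.valid ha (h1.trans h2.symm)
  · intro s hs hmax
    -- every index has exactly one of x_i, y_i in s
    have hone : ∀ i, Sum.inl i ∈ s ∨ Sum.inr i ∈ s := by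
      intro i
      by_contra h
      push_neg at h
      obtain ⟨hx, hy⟩ := h
      -- insert inl i : not independent (by maximality), so ∃ inr j ∈ s adjacent
      have h1 : ¬ IsIndep H (insert (Sum.inl i) s) := by
        intro hind
        have := hmax _ hind (Finset.subset_insert _ _)
        exact hx (this ▸ Finset.mem_insert_self _ _)
      have h2 : ¬ IsIndep H (insert (Sum.inr i) s) := by
        intro hind
        have := hmax _ hind (Finset.subset_insert _ _)
        exact hy (this ▸ Finset.mem_insert_self _ _)
      -- extract witnesses
      have w1 : ∃ j, Sum.inr j ∈ s ∧ H.Adj (Sum.inl i) (Sum.inr j) := by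
        by_contra hw
        push_neg at hw
        apply h1
        intro u hu v hv hadj
        rcases Finset.mem_insert.1 hu with rfl | hu
        · rcases Finset.mem_insert.1 hv with rfl | hv
          · exact H.loopless.irrefl _ hadj
          · match v with
            | Sum.inl j => exact hll i j hadj
            | Sum.inr j => exact hw j hv hadj
        · rcases Finset.mem_insert.1 hv with rfl | hv
          · match u with
            | Sum.inl j => exact hll i j hadj.symm
            | Sum.inr j => exact hw j hu hadj.symm
          · exact hs u hu v hv hadj
      have w2 : ∃ k, Sum.inl k ∈ s ∧ H.Adj (Sum.inl k) (Sum.inr i) := by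
        by_contra hw
        push_neg at hw
        apply h2
        intro u hu v hv hadj
        rcases Finset.mem_insert.1 hu with rfl | hu
        · rcases Finset.mem_insert.1 hv with rfl | hv
          · exact H.loopless.irrefl _ hadj
          · match v with
            | Sum.inl j => exact hw j hv hadj.symm
            | Sum.inr j => exact hrr i j hadj
        · rcases Finset.mem_insert.1 hv with rfl | hv
          · match u with
            | Sum.inl j => exact hw j hu hadj
            | Sum.inr j => exact hrr j i hadj
          · exact hs u hu v hv hadj
      obtain ⟨j, hj, hadj1⟩ := w1
      obtain ⟨k, hk, hadj2⟩ := w2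
      rw [hlr] at hadj1 hadj2
      rcases hadj1 with h | ⟨-, hCi⟩
      · exact hy (h ▸ hj)
      rcases hadj2 with h | ⟨hGk, hCk⟩
      · exact hx (h ▸ hk)
      exact C.valid hGk (hCk.trans hCi.symm)
    have hboth : ∀ i, ¬ (Sum.inl i ∈ s ∧ Sum.inr i ∈ s) := by
      rintro i ⟨h1, h2⟩
      exact hs _ h1 _ h2 (hdiag i)
    classical
    have himg : s.image (Sum.elim id id) = Finset.univ := by
      apply Finset.eq_univ_iff_forall.2
      intro i
      rcases hone i with h | h
      · exact Finset.mem_image.2 ⟨Sum.inl i, h, rfl⟩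
      · exact Finset.mem_image.2 ⟨Sum.inr i, h, rfl⟩
    have hinj : Set.InjOn (Sum.elim id id) (s : Set (Fin n ⊕ Fin n)) := by
      rintro a ha b hb hab
      match a, b with
      | Sum.inl i, Sum.inl j => simp_all
      | Sum.inr i, Sum.inr j => simp_all
      | Sum.inl i, Sum.inr j =>
        simp at hab; subst hab; exact absurd ⟨ha, hb⟩ (hboth i)
      | Sum.inr i, Sum.inl j =>
        simp at hab; subst hab; exact absurd ⟨hb, ha⟩ (hboth i)
    calc s.card = (s.image (Sum.elim id id)).card :=
          (Finset.card_image_of_injOn hinj).symm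
      _ = n := by rw [himg]; simp
end

section
/- Let G be a finite simple graph containing an odd hole, i.e., an induced cycle of odd length at least five. Then no extrusion Ĝ of G has a pure independence complex; in particular, G is not Cohen-Macaulay extrudable. -/
lemma parity_bool {N : ℕ} (hN : N % 2 = 1) (ε : ZMod N → Bool) :
    ∃ i, ε (i + 1) = ε i := by
  by_contra h
  push_neg at h
  have h' : ∀ i, ε (i + 1) = !ε i := by
    intro i
    cases hb : ε i <;> cases hb' : ε (i + 1) <;> simp_all <;> exact h i (hb'.trans hb.symm)
  have heven : ∀ k : ℕ, ε ((2 * k : ℕ) : ZMod N) = ε 0 := by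
    intro k
    induction k with
    | zero => simp
    | succ k ih =>
      have hcast : ((2 * (k + 1) : ℕ) : ZMod N) = ((2 * k : ℕ) : ZMod N) + 1 + 1 := by
        push_cast; ring
      rw [hcast, h', h', Bool.not_not, ih]
  have hodd : ε ((N + 1 : ℕ) : ZMod N) = !ε 0 := by
    have hcast : ((N + 1 : ℕ) : ZMod N) = (0 : ZMod N) + 1 := by
      push_cast [ZMod.natCast_self]; ring
    rw [hcast, h']
  have h2 : N + 1 = 2 * ((N + 1) / 2) := by omega
  have := heven ((N + 1) / 2)
  rw [← h2] at this
  rw [this] at hodd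
  simp at hodd

lemma key_nonpure {n : ℕ} (H : SimpleGraph (Fin n ⊕ Fin n))
    (hX : ∀ i j, ¬ H.Adj (Sum.inl i) (Sum.inl j))
    (hM : ∀ i, H.Adj (Sum.inl i) (Sum.inr i))
    (a b cc : Fin n)
    (hab : H.Adj (Sum.inl a) (Sum.inr b))
    (hbc : H.Adj (Sum.inl b) (Sum.inr cc))
    (hac : ¬ H.Adj (Sum.inl a) (Sum.inr cc))
    (hpure : ∀ s t : Finset (Fin n ⊕ Fin n), IsIndep H s → IsIndep H t →
        (∀ s', IsIndep H s' → s ⊆ s' → s = s') →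
        (∀ t', IsIndep H t' → t ⊆ t' → t = t') → s.card = t.card) : False := by
  classical
  have hn : 0 < n := a.pos
  have hne_ab : a ≠ b := by rintro rfl; exact hac hbc
  have hne_bc : b ≠ cc := by rintro rfl; exact hac hab
  set S0 : Finset (Fin n ⊕ Fin n) := {Sum.inl a, Sum.inr cc} with hS0
  have hS0indep : IsIndep H S0 := by
    intro u hu v hv
    simp only [hS0, Finset.mem_insert, Finset.mem_singleton] at hu hv
    rcases hu with rfl | rfl <;> rcases hv with rfl | rfl
    · exact H.irrefl
    · exact hac
    · exact fun h => hac h.symm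
    · exact H.irrefl
  set T : Finset (Finset (Fin n ⊕ Fin n)) := Finset.univ.filter
    (fun s => IsIndep H s ∧ S0 ⊆ s ∧ Sum.inl b ∉ s ∧ Sum.inr b ∉ s) with hT
  have hS0T : S0 ∈ T := by
    simp only [hT, Finset.mem_filter, Finset.mem_univ, true_and]
    refine ⟨hS0indep, subset_rfl, ?_, ?_⟩ <;>
      simp only [hS0, Finset.mem_insert, Finset.mem_singleton] <;> push_neg <;>
        refine ⟨?_, ?_⟩ <;> intro h <;> simp_all
  obtain ⟨s, hsT, hsmaxcard⟩ := T.exists_max_image Finset.card ⟨S0, hS0T⟩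
  rw [hT, Finset.mem_filter] at hsT
  obtain ⟨-, hs_indep, hS0s, hbl, hbr⟩ := hsT
  have hla : Sum.inl a ∈ s := hS0s (by simp [hS0])
  have hrc : Sum.inr cc ∈ s := hS0s (by simp [hS0])
  have hsmaximal : ∀ s', IsIndep H s' → s ⊆ s' → s = s' := by
    intro s' hs' hsub
    have hmem : s' ∈ T := by
      rw [hT, Finset.mem_filter]
      refine ⟨Finset.mem_univ _, hs', hS0s.trans hsub, ?_, ?_⟩
      · exact fun h => hs' _ h _ (hsub hrc) hbc
      · exact fun h => hs' _ (hsub hla) _ h hab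
    exact Finset.eq_of_subset_of_card_le hsub (hsmaxcard s' hmem)
  set X : Finset (Fin n ⊕ Fin n) := Finset.univ.image Sum.inl with hXdef
  have hXindep : IsIndep H X := by
    intro u hu v hv
    simp only [hXdef, Finset.mem_image, Finset.mem_univ, true_and] at hu hv
    obtain ⟨i, rfl⟩ := hu
    obtain ⟨j, rfl⟩ := hv
    exact hX i j
  have hXmax : ∀ t', IsIndep H t' → X ⊆ t' → X = t' := by
    intro t' ht' hsub
    refine Finset.Subset.antisymm hsub ?_
    intro v hv
    cases v with
    | inl i => simp [hXdef]
    | inr i =>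
      exact absurd (hM i) (ht' _ (hsub (by simp [hXdef])) _ hv)
  have hXcard : X.card = n := by
    rw [hXdef, Finset.card_image_of_injective _ Sum.inl_injective, Finset.card_univ,
      Fintype.card_fin]
  have hinj : Set.InjOn (Sum.elim id id : Fin n ⊕ Fin n → Fin n) s := by
    intro u hu v hv huv
    cases u with
    | inl i =>
      cases v with
      | inl j => simpa using huv
      | inr j =>
        simp only [Sum.elim_inl, Sum.elim_inr, id] at huv
        subst huv
        exact absurd (hM i) (hs_indep _ hu _ hv)
    | inr i =>
      cases v with
      | inl j =>
        simp only [Sum.elim_inl, Sum.elim_inr, id] at huv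
        subst huv
        exact absurd (hM i).symm (hs_indep _ hu _ hv)
      | inr j => simpa using huv
  have hscard : s.card = (s.image (Sum.elim id id)).card :=
    (Finset.card_image_of_injOn hinj).symm
  have hsub' : s.image (Sum.elim id id) ⊆ Finset.univ.erase b := by
    intro x hx
    simp only [Finset.mem_image] at hx
    obtain ⟨u, hu, rfl⟩ := hx
    rw [Finset.mem_erase]
    refine ⟨?_, Finset.mem_univ _⟩
    cases u with
    | inl i =>
      simp only [Sum.elim_inl, id]
      rintro rfl; exact hbl hu
    | inr i =>
      simp only [Sum.elim_inr, id]
      rintro rfl; exact hbr hu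
  have hlt : s.card < n := by
    have h1 := Finset.card_le_card hsub'
    rw [Finset.card_erase_of_mem (Finset.mem_univ _), Finset.card_univ, Fintype.card_fin] at h1
    omega
  have := hpure s X hs_indep hXindep hsmaximal hXmax
  omega


/-- If a graph `G` contains an odd hole (an induced cycle of odd length `2m+1 ≥ 5`, given
by an injective map `c : ZMod (2m+1) → Fin n` whose image induces exactly the cycle
adjacencies), then no extrusion of `G` has a pure independence complex; in particular,
`G` is not Cohen-Macaulay extrudable. -/
theorem oddHole_not_extrudable {n : ℕ} (G : SimpleGraph (Fin n)) {m : ℕ} (hm : 2 ≤ m)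
    (c : ZMod (2 * m + 1) → Fin n) (hcinj : Function.Injective c)
    (hole : ∀ i j, G.Adj (c i) (c j) ↔ (j = i + 1 ∨ i = j + 1)) :
    ∀ H : SimpleGraph (Fin n ⊕ Fin n), IsExtrusion G H →
      ¬ (∀ s t : Finset (Fin n ⊕ Fin n), IsIndep H s → IsIndep H t →
          (∀ s', IsIndep H s' → s ⊆ s' → s = s') →
          (∀ t', IsIndep H t' → t ⊆ t' → t = t') → s.card = t.card) := by
  intro H hExt hpure
  obtain ⟨hX, hY, hM, hOr, hnot⟩ := hExt
  classical
  -- small nonzero casts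
  have hcastne : ∀ k : ℕ, 0 < k → k < 2 * m + 1 → ((k : ℕ) : ZMod (2 * m + 1)) ≠ 0 := by
    intro k hk hkN h0
    rw [ZMod.natCast_eq_zero_iff] at h0
    have := Nat.le_of_dvd hk h0
    omega
  have hne1 : ∀ i : ZMod (2 * m + 1), i ≠ i + 1 := by
    intro i h
    have : ((1 : ℕ) : ZMod (2 * m + 1)) = 0 := by
      have := (left_eq_add).mp h
      simpa using this
    exact hcastne 1 (by omega) (by omega) this
  have hne2 : ∀ i : ZMod (2 * m + 1), i ≠ i + 2 := by
    intro i h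
    have : ((2 : ℕ) : ZMod (2 * m + 1)) = 0 := by
      have := (left_eq_add).mp h
      simpa using this
    exact hcastne 2 (by omega) (by omega) this
  have hne3 : ∀ i : ZMod (2 * m + 1), i ≠ i + 3 := by
    intro i h
    have : ((3 : ℕ) : ZMod (2 * m + 1)) = 0 := by
      have := (left_eq_add).mp h
      simpa using this
    exact hcastne 3 (by omega) (by omega) this
  -- non-adjacency at distance two
  have hnadj2 : ∀ i : ZMod (2 * m + 1), ¬ G.Adj (c i) (c (i + 2)) := by
    intro i h
    rcases (hole i (i + 2)).mp h with h' | h'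
    · exact hne1 (i + 1) (by linear_combination -h')
    · exact hne3 i (by linear_combination h')
  have hGedge : ∀ i : ZMod (2 * m + 1), G.Adj (c i) (c (i + 1)) := fun i => (hole i (i + 1)).mpr (Or.inl rfl)
  -- orientation function
  set ε : ZMod (2 * m + 1) → Bool := fun i => decide (H.Adj (Sum.inl (c i)) (Sum.inr (c (i + 1)))) with hε
  obtain ⟨i, hi⟩ := parity_bool (by omega : (2 * m + 1) % 2 = 1) ε
  have hAlt : ∀ j : ZMod (2 * m + 1), ε j = false → H.Adj (Sum.inl (c (j + 1))) (Sum.inr (c j)) := by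
    intro j hj
    have hne : c j ≠ c (j + 1) := fun h => hne1 j (hcinj h)
    have := (hOr (c j) (c (j + 1)) hne).mpr (hGedge j)
    rcases this with h | h
    · exact absurd h (by simpa [hε] using hj)
    · exact h
  have hAltT : ∀ j : ZMod (2 * m + 1), ε j = true → H.Adj (Sum.inl (c j)) (Sum.inr (c (j + 1))) := by
    intro j hj
    simpa [hε] using hj
  cases hbi : ε i with
  | true =>
    rw [hbi] at hi
    have hab := hAltT i hbi
    have hbc := hAltT (i + 1) hi
    have hneac : c i ≠ c (i + 2) := fun h => hne2 i (hcinj h)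
    have hac : ¬ H.Adj (Sum.inl (c i)) (Sum.inr (c (i + 1 + 1))) := by
      intro h
      have h2 : (i + 1 + 1 : ZMod (2 * m + 1)) = i + 2 := by ring
      rw [h2] at h
      exact hnadj2 i ((hOr _ _ hneac).mp (Or.inl h))
    exact key_nonpure H hX hM (c i) (c (i + 1)) (c (i + 1 + 1)) hab hbc hac hpure
  | false =>
    rw [hbi] at hi
    have hab := hAlt (i + 1) hi  -- Adj (inl c(i+2)) (inr c(i+1))
    have hbc := hAlt i hbi       -- Adj (inl c(i+1)) (inr c i)
    have hneca : c (i + 1 + 1) ≠ c i := by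
      intro h
      exact hne2 i (by linear_combination -(hcinj h))
    have hac : ¬ H.Adj (Sum.inl (c (i + 1 + 1))) (Sum.inr (c i)) := by
      intro h
      have := (hOr _ _ hneca).mp (Or.inl h)
      have h2 : (i + 1 + 1 : ZMod (2 * m + 1)) = i + 2 := by ring
      rw [h2] at this
      exact hnadj2 i this.symm
    exact key_nonpure H hX hM (c (i + 1 + 1)) (c (i + 1)) (c i) hab hbc hac hpure
end

section
/- For every finite simple graph G on n vertices there exists a finite simple graph H such that the independence complex Ind(H) is pure and vertex-decomposable, every maximal independent set of H has cardinality n, and for every j with 0 ≤ j ≤ n the number of independent sets of cardinality j in H equals Σ_{i=0}^{j} C(n−i, j−i) · f_{i−1}(G), where f_{i−1}(G) is the number of independent sets of cardinality i in G. That is, the face vector of every flag complex is the h-vector of some vertex-decomposable flag complex. (One may take H to be the full whiskering of G.) -/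
open Finset

section Aux

lemma pure_congr {α : Type*} {Δ₁ Δ₂ : Finset α → Prop} (h : ∀ s, Δ₁ s ↔ Δ₂ s) :
    IsPureCpx Δ₁ → IsPureCpx Δ₂ := by
  intro hp s t hs ht hms hmt
  exact hp s t ((h s).2 hs) ((h t).2 ht)
    (fun s' hs' hss => hms s' ((h s').1 hs') hss)
    (fun t' ht' htt => hmt t' ((h t').1 ht') htt)

lemma vd_congr {α : Type*} [DecidableEq α] {Δ₁ Δ₂ : Finset α → Prop}
    (h : ∀ s, Δ₁ s ↔ Δ₂ s) (hd : VertexDecomposable Δ₁) : VertexDecomposable Δ₂ := by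
  induction hd generalizing Δ₂ with
  | simplex F hF => exact .simplex F (fun s => ((h s).symm.trans (hF s)))
  | shed v hv hlp hdp hl hd ihl ihd =>
    exact .shed v ((h _).1 hv)
      (pure_congr (fun s => and_congr_right fun _ => h (insert v s)) hlp)
      (pure_congr (fun s => and_congr_right fun _ => h s) hdp)
      (ihl (fun s => and_congr_right fun _ => h (insert v s)))
      (ihd (fun s => and_congr_right fun _ => h s))

lemma isIndep_insert {W : Type*} [DecidableEq W] {H : SimpleGraph W} {a : W} {s : Finset W} :
    IsIndep H (insert a s) ↔ IsIndep H s ∧ ∀ x ∈ s, ¬ H.Adj a x := by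
  constructor
  · intro h
    exact ⟨fun u hu v hv => h u (mem_insert_of_mem hu) v (mem_insert_of_mem hv),
      fun x hx => h a (mem_insert_self _ _) x (mem_insert_of_mem hx)⟩
  · rintro ⟨h1, h2⟩ u hu v hv hadj
    rcases mem_insert.1 hu with hua | hu
    · rcases mem_insert.1 hv with hva | hv
      · exact H.irrefl (by rwa [hua, hva] at hadj)
      · exact h2 v hv (by rwa [hua] at hadj)
    · rcases mem_insert.1 hv with hva | hv
      · exact h2 u hu (by rw [hva] at hadj; exact hadj.symm)
      · exact h1 u hu v hv hadj

lemma sum_decomp {V : Type*} [Fintype V] [DecidableEq V] (s : Finset (V ⊕ V)) :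
    s = (univ.filter fun u => Sum.inl u ∈ s).image Sum.inl ∪
        (univ.filter fun u => Sum.inr u ∈ s).image Sum.inr := by
  ext (u | u) <;> simp

lemma sum_decomp_card {V : Type*} [Fintype V] [DecidableEq V] (s : Finset (V ⊕ V)) :
    s.card = (univ.filter fun u => Sum.inl u ∈ s).card +
             (univ.filter fun u => Sum.inr u ∈ s).card := by
  conv_lhs => rw [sum_decomp s]
  rw [card_union_of_disjoint, card_image_of_injective _ Sum.inl_injective,
    card_image_of_injective _ Sum.inr_injective]
  simp [Finset.disjoint_left]

end Aux

section Whisk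

set_option linter.unusedSectionVars false

variable {V : Type} [Fintype V] [DecidableEq V] (G : SimpleGraph V)

def Whisk : SimpleGraph (V ⊕ V) where
  Adj x y := match x, y with
    | .inl a, .inl b => G.Adj a b
    | .inl a, .inr b => a = b
    | .inr a, .inl b => a = b
    | .inr _, .inr _ => False
  symm := by
    constructor
    rintro (a | a) (b | b) h
    · exact h.symm
    · exact h.symm
    · exact h.symm
    · exact h
  loopless := by
    constructor
    rintro (a | a) h
    · exact G.irrefl h
    · exact h

@[simp] lemma whisk_adj_ll {a b : V} : (Whisk G).Adj (Sum.inl a) (Sum.inl b) ↔ G.Adj a b := Iff.rfl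
@[simp] lemma whisk_adj_lr {a b : V} : (Whisk G).Adj (Sum.inl a) (Sum.inr b) ↔ a = b := Iff.rfl
@[simp] lemma whisk_adj_rl {a b : V} : (Whisk G).Adj (Sum.inr a) (Sum.inl b) ↔ a = b := Iff.rfl
@[simp] lemma whisk_adj_rr {a b : V} : ¬ (Whisk G).Adj (Sum.inr a) (Sum.inr b) := fun h => h

def Δcpx (S R : Finset V) (s : Finset (V ⊕ V)) : Prop :=
  (∀ u, Sum.inl u ∈ s → u ∈ S) ∧ (∀ u, Sum.inr u ∈ s → u ∉ R) ∧ IsIndep (Whisk G) s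

lemma maximal_card {S R : Finset V} (hdis : ∀ u ∈ R, u ∉ S) {s : Finset (V ⊕ V)}
    (hs : Δcpx G S R s) (hmax : ∀ s', Δcpx G S R s' → s ⊆ s' → s = s') :
    s.card = Fintype.card V - R.card := by
  classical
  obtain ⟨h1, h2, h3⟩ := hs
  set A := univ.filter fun u => Sum.inl u ∈ s with hA
  set B := univ.filter fun u => Sum.inr u ∈ s with hB
  have hBeq : B = Rᶜ \ A := by
    ext u
    simp only [hB, hA, mem_filter, mem_univ, true_and, mem_sdiff, mem_compl]
    constructor
    · intro hu
      refine ⟨h2 u hu, fun hl => ?_⟩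
      exact h3 _ hl _ hu rfl
    · rintro ⟨hur, hua⟩
      by_contra hno
      have hcpx : Δcpx G S R (insert (Sum.inr u) s) := by
        refine ⟨fun w hw => h1 w (by simpa using (mem_insert.1 hw).resolve_left (by simp)), ?_, ?_⟩
        · intro w hw
          rcases mem_insert.1 hw with hw | hw
          · rw [Sum.inr.injEq] at hw; subst hw; exact hur
          · exact h2 w hw
        · rw [isIndep_insert]
          refine ⟨h3, ?_⟩
          rintro (w | w) hw hadj
          · simp only [whisk_adj_rl] at hadj; subst hadj; exact hua hw
          · exact hadj
      have := hmax _ hcpx (subset_insert _ _)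
      exact hno (by rw [this]; exact mem_insert_self _ _)
  have hAR : A ⊆ Rᶜ := by
    intro u hu
    simp only [hA, mem_filter, mem_univ, true_and] at hu
    exact mem_compl.2 fun hr => hdis u hr (h1 u hu)
  have hcard := sum_decomp_card s
  rw [← hA, ← hB, hBeq, card_sdiff_of_subset hAR] at hcard
  have h4 : A.card ≤ Rᶜ.card := card_le_card hAR
  rw [card_compl] at hcard h4
  omega

lemma pure_delta {S R : Finset V} (hdis : ∀ u ∈ R, u ∉ S) : IsPureCpx (Δcpx G S R) :=
  fun s t hs ht hms hmt => by
    rw [maximal_card G hdis hs hms, maximal_card G hdis ht hmt]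

lemma vd_delta_empty (R : Finset V) : VertexDecomposable (Δcpx G ∅ R) := by
  apply VertexDecomposable.simplex ((Rᶜ).image Sum.inr)
  intro s
  constructor
  · rintro ⟨h1, h2, _⟩ x hx
    rcases x with u | u
    · exact absurd (h1 u hx) (notMem_empty u)
    · exact mem_image.2 ⟨u, mem_compl.2 (h2 u hx), rfl⟩
  · intro hsub
    refine ⟨fun u hu => ?_, fun u hu => ?_, fun x hx y hy hadj => ?_⟩
    · rcases mem_image.1 (hsub hu) with ⟨w, _, hw⟩
      exact absurd hw (by simp)
    · rcases mem_image.1 (hsub hu) with ⟨w, hw, hwe⟩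
      rw [Sum.inr.injEq] at hwe
      subst hwe
      exact mem_compl.1 hw
    · rcases mem_image.1 (hsub hx) with ⟨a, _, ha⟩
      rcases mem_image.1 (hsub hy) with ⟨b, _, hb⟩
      subst ha; subst hb
      exact hadj

lemma link_iff {S R : Finset V} [DecidableRel G.Adj] (v : V) (hv : v ∈ S) (s : Finset (V ⊕ V)) :
    (Sum.inl v ∉ s ∧ Δcpx G S R (insert (Sum.inl v) s)) ↔
      Δcpx G (S \ insert v (univ.filter fun u => G.Adj v u)) (insert v R) s := by
  constructor
  · rintro ⟨hvs, h1, h2, h3⟩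
    refine ⟨fun u hu => ?_, fun u hu => ?_, (isIndep_insert.1 h3).1⟩
    · rw [mem_sdiff, mem_insert, mem_filter]
      refine ⟨h1 u (mem_insert_of_mem hu), ?_⟩
      push_neg
      constructor
      · rintro rfl; exact hvs hu
      · intro _
        exact h3 (Sum.inl v) (mem_insert_self _ _) (Sum.inl u) (mem_insert_of_mem hu)
    · rw [mem_insert]
      push_neg
      refine ⟨?_, h2 u (mem_insert_of_mem hu)⟩
      rintro rfl
      exact h3 (Sum.inl u) (mem_insert_self _ _) (Sum.inr u) (mem_insert_of_mem hu) rfl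
  · rintro ⟨h1, h2, h3⟩
    have hvs : Sum.inl v ∉ s := by
      intro hmem
      have := h1 v hmem
      rw [mem_sdiff] at this
      exact this.2 (mem_insert_self _ _)
    refine ⟨hvs, fun u hu => ?_, fun u hu => ?_, ?_⟩
    · rcases mem_insert.1 hu with he | hu
      · rw [Sum.inl.injEq] at he; subst he; exact hv
      · exact (mem_sdiff.1 (h1 u hu)).1
    · rcases mem_insert.1 hu with he | hu
      · exact absurd he (by simp)
      · intro hr
        exact (h2 u hu) (mem_insert_of_mem hr)
    · rw [isIndep_insert]
      refine ⟨h3, ?_⟩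
      rintro (u | u) hx hadj
      · have := mem_sdiff.1 (h1 u hx)
        rw [mem_insert, mem_filter] at this
        push_neg at this
        exact this.2.2 (mem_univ u) hadj
      · rw [whisk_adj_lr] at hadj
        subst hadj
        exact (h2 v hx) (mem_insert_self _ _)

lemma del_iff {S R : Finset V} (v : V) (s : Finset (V ⊕ V)) :
    (Sum.inl v ∉ s ∧ Δcpx G S R s) ↔ Δcpx G (S.erase v) R s := by
  constructor
  · rintro ⟨hvs, h1, h2, h3⟩
    refine ⟨fun u hu => mem_erase.2 ⟨?_, h1 u hu⟩, h2, h3⟩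
    rintro rfl; exact hvs hu
  · rintro ⟨h1, h2, h3⟩
    refine ⟨fun hmem => (mem_erase.1 (h1 v hmem)).1 rfl,
      fun u hu => (mem_erase.1 (h1 u hu)).2, h2, h3⟩

lemma vd_delta : ∀ (n : ℕ) (S R : Finset V), S.card ≤ n → (∀ u ∈ R, u ∉ S) →
    VertexDecomposable (Δcpx G S R) := by
  intro n
  induction n with
  | zero =>
    intro S R hcard _
    rw [Nat.le_zero, card_eq_zero] at hcard
    subst hcard
    exact vd_delta_empty G R
  | succ n ih =>
    intro S R hcard hdis
    classical
    rcases S.eq_empty_or_nonempty with rfl | ⟨v, hv⟩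
    · exact vd_delta_empty G R
    · set S' := S \ insert v (univ.filter fun u => G.Adj v u) with hS'
      have hsub : S' ⊆ S.erase v := by
        intro u hu
        rw [hS', mem_sdiff, mem_insert] at hu
        push_neg at hu
        exact mem_erase.2 ⟨hu.2.1, hu.1⟩
      have hce : (S.erase v).card ≤ n := by
        have := card_erase_of_mem hv
        omega
      have hdis' : ∀ u ∈ insert v R, u ∉ S' := by
        intro u hu hus
        rcases mem_insert.1 hu with rfl | hu
        · rw [hS', mem_sdiff] at hus
          exact hus.2 (mem_insert_self _ _)
        · exact hdis u hu (mem_sdiff.1 hus).1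
      have hdise : ∀ u ∈ R, u ∉ S.erase v := fun u hu hue => hdis u hu (mem_erase.1 hue).2
      refine VertexDecomposable.shed (Sum.inl v) ?_ ?_ ?_ ?_ ?_
      · refine ⟨?_, ?_, ?_⟩
        · intro u hu
          rw [mem_singleton, Sum.inl.injEq] at hu
          subst hu; exact hv
        · intro u hu
          rw [mem_singleton] at hu
          exact absurd hu (by simp)
        · intro x hx y hy hadj
          rw [mem_singleton] at hx hy
          subst hx; subst hy
          exact (Whisk G).irrefl hadj
      · exact pure_congr (fun s => (link_iff G v hv s).symm) (pure_delta G hdis')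
      · exact pure_congr (fun s => (del_iff G v s).symm) (pure_delta G hdise)
      · exact vd_congr (fun s => (link_iff G v hv s).symm)
          (ih S' (insert v R) (le_trans (card_le_card hsub) hce) hdis')
      · exact vd_congr (fun s => (del_iff G v s).symm)
          (ih (S.erase v) R hce hdise)

lemma indepCount_eq_filter {W : Type*} [Fintype W] (H : SimpleGraph W) (k : ℕ) :
    indepCount H k =
      (@Finset.filter _ (fun s : Finset W => IsIndep H s ∧ s.card = k)
        (Classical.decPred _) univ).card := by
  classical
  rw [indepCount]
  have : {s : Finset W | IsIndep H s ∧ s.card = k} =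
      ↑(@Finset.filter _ (fun s : Finset W => IsIndep H s ∧ s.card = k)
        (Classical.decPred _) univ) := by
    ext s; simp
  rw [this, Set.ncard_coe_finset]

lemma count_main (j : ℕ) :
    indepCount (Whisk G) j =
      ∑ i ∈ range (j + 1), (Fintype.card V - i).choose (j - i) * indepCount G i := by
  classical
  rw [indepCount_eq_filter]
  set lft : Finset (V ⊕ V) → Finset V := fun s => univ.filter fun u => Sum.inl u ∈ s with hlft
  set rgt : Finset (V ⊕ V) → Finset V := fun s => univ.filter fun u => Sum.inr u ∈ s with hrgt
  have hmemlft : ∀ (s : Finset (V ⊕ V)) (u : V), u ∈ lft s ↔ Sum.inl u ∈ s := by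
    intro s u; simp [hlft]
  have hmemrgt : ∀ (s : Finset (V ⊕ V)) (u : V), u ∈ rgt s ↔ Sum.inr u ∈ s := by
    intro s u; simp [hrgt]
  rw [card_eq_sum_card_fiberwise (f := fun s => (lft s).card) (t := range (j + 1))
    (fun s hs => by
      simp only [mem_coe, mem_filter, mem_univ, true_and] at hs
      rw [mem_coe, mem_range]
      show (lft s).card < j + 1
      have h : s.card = (lft s).card + (rgt s).card := sum_decomp_card s
      omega)]
  refine Finset.sum_congr rfl ?_
  intro i hi
  rw [mem_range] at hi
  rw [indepCount_eq_filter]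
  rw [card_eq_sum_card_fiberwise (f := fun s => lft s)
    (t := @Finset.filter _ (fun A : Finset V => IsIndep G A ∧ A.card = i)
        (Classical.decPred _) univ)
    (fun s hs => by
      simp only [mem_coe, mem_filter, mem_univ, true_and] at hs ⊢
      obtain ⟨⟨hind, _⟩, hcard⟩ := hs
      refine ⟨fun a ha b hb hadj => ?_, hcard⟩
      rw [hmemlft] at ha hb
      exact hind _ ha _ hb hadj)]
  rw [Finset.sum_congr rfl (g := fun _ => (Fintype.card V - i).choose (j - i)) ?_,
    Finset.sum_const, smul_eq_mul, mul_comm]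
  intro A hA
  simp only [mem_filter, mem_univ, true_and] at hA
  obtain ⟨hAind, hAcard⟩ := hA
  have hAc : Aᶜ.card = Fintype.card V - i := by rw [card_compl, hAcard]
  rw [← hAc, ← Finset.card_powersetCard]
  apply Finset.card_bij (fun s _ => rgt s)
  · intro s hs
    simp only [mem_filter, mem_univ, true_and] at hs
    obtain ⟨⟨⟨hind, hcard⟩, _⟩, hlfteq⟩ := hs
    rw [mem_powersetCard]
    constructor
    · intro u hu
      rw [hmemrgt] at hu
      rw [mem_compl]
      intro hua
      rw [← hlfteq, hmemlft] at hua
      exact hind _ hua _ hu rfl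
    · have h : s.card = (lft s).card + (rgt s).card := sum_decomp_card s
      rw [hlfteq, hAcard] at h
      omega
  · intro s1 hs1 s2 hs2 heq
    simp only [mem_filter, mem_univ, true_and] at hs1 hs2
    have d1 : s1 = (lft s1).image Sum.inl ∪ (rgt s1).image Sum.inr := sum_decomp s1
    have d2 : s2 = (lft s2).image Sum.inl ∪ (rgt s2).image Sum.inr := sum_decomp s2
    rw [d1, d2, hs1.2, hs2.2, heq]
  · intro B hB
    rw [mem_powersetCard] at hB
    obtain ⟨hBsub, hBcard⟩ := hB
    refine ⟨A.image Sum.inl ∪ B.image Sum.inr, ?_, ?_⟩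
    · have hlfteq : lft (A.image Sum.inl ∪ B.image Sum.inr) = A := by
        ext u
        rw [hmemlft]
        simp
      have hrgteq : rgt (A.image Sum.inl ∪ B.image Sum.inr) = B := by
        ext u
        rw [hmemrgt]
        simp
      simp only [mem_filter, mem_univ, true_and]
      refine ⟨⟨⟨?_, ?_⟩, by rw [hlfteq, hAcard]⟩, hlfteq⟩
      · rintro x hx y hy hadj
        rcases mem_union.1 hx with hx | hx <;> rcases mem_union.1 hy with hy | hy <;>
          obtain ⟨a, haA, rfl⟩ := mem_image.1 hx <;> obtain ⟨b, hbB, rfl⟩ := mem_image.1 hy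
        · exact hAind _ haA _ hbB hadj
        · rw [whisk_adj_lr] at hadj
          subst hadj
          exact (mem_compl.1 (hBsub hbB)) haA
        · rw [whisk_adj_rl] at hadj
          subst hadj
          exact (mem_compl.1 (hBsub haA)) hbB
        · exact hadj
      · rw [card_union_of_disjoint, card_image_of_injective _ Sum.inl_injective,
          card_image_of_injective _ Sum.inr_injective, hAcard, hBcard]
        · omega
        · simp [Finset.disjoint_left]
    · ext u
      rw [hmemrgt]
      simp

end Whisk

/-- The face vector of every flag complex is the `h`-vector of some vertex-decomposable
flag complex: for every graph `G` on `n` vertices there is a graph `H` whose independence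
complex is pure and vertex-decomposable, all of whose maximal independent sets have
cardinality `n`, and such that for `0 ≤ j ≤ n` the number of independent sets of
cardinality `j` in `H` equals `∑_{i=0}^{j} C(n-i, j-i) · f_{i-1}(G)`. -/
theorem flag_f_is_vd_flag_h {V : Type} [Fintype V] [DecidableEq V] (G : SimpleGraph V) :
    ∃ (W : Type) (_ : Fintype W) (_ : DecidableEq W) (H : SimpleGraph W),
      IsPureCpx (fun s : Finset W => IsIndep H s) ∧
      VertexDecomposable (fun s : Finset W => IsIndep H s) ∧
      (∀ s : Finset W, IsIndep H s →
        (∀ s', IsIndep H s' → s ⊆ s' → s = s') → s.card = Fintype.card V) ∧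
      (∀ j ≤ Fintype.card V,
        indepCount H j =
          ∑ i ∈ Finset.range (j + 1),
            (Fintype.card V - i).choose (j - i) * indepCount G i) := by
  classical
  refine ⟨V ⊕ V, inferInstance, inferInstance, Whisk G, ?_, ?_, ?_, ?_⟩
  case _ =>
    exact pure_congr (fun s => ⟨fun h => h.2.2,
        fun h => ⟨fun u _ => Finset.mem_univ u, fun u _ h' => Finset.notMem_empty u h', h⟩⟩)
      (pure_delta G (fun u hu => absurd hu (Finset.notMem_empty u)))
  case _ =>
    exact vd_congr (fun s => ⟨fun h => h.2.2,
        fun h => ⟨fun u _ => Finset.mem_univ u, fun u _ h' => Finset.notMem_empty u h', h⟩⟩)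
      (vd_delta G (Finset.univ.card) Finset.univ ∅ le_rfl
        (fun u hu => absurd hu (Finset.notMem_empty u)))
  case _ =>
    intro s hs hmax
    have := maximal_card G (S := Finset.univ) (R := ∅)
      (fun u hu => absurd hu (Finset.notMem_empty u))
      ⟨fun u _ => Finset.mem_univ u, fun u _ h' => Finset.notMem_empty u h', hs⟩
      (fun s' hs' hss => hmax s' hs'.2.2 hss)
    simpa using this
  case _ =>
    intro j _
    exact count_main G j
end

section
/- For every bipartite graph G on n vertices there exists a bipartite graph H such that the independence complex Ind(H) is pure and vertex-decomposable, every maximal independent set of H has cardinality n, and for every j with 0 ≤ j ≤ n the number of independent sets of cardinality j in H equals Σ_{i=0}^{j} C(n−i, j−i) · f_{i−1}(G), where f_{i−1}(G) is the number of independent sets of cardinality i in G. That is, the face vector of the independence complex of every bipartite graph is the h-vector of the independence complex of a bipartite graph that is vertex-decomposable. (One may take H to be the full whiskering of G, which is again bipartite.) -/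
open Finset

open scoped Classical

namespace WhiskerAux

lemma indepCount_eq_card {α : Type*} [Fintype α] (K : SimpleGraph α) (k : ℕ) :
    indepCount K k = (Finset.univ.filter fun s : Finset α => IsIndep K s ∧ s.card = k).card := by
  rw [indepCount, ← Set.ncard_coe_finset]
  congr 1
  ext s
  simp


variable {V : Type} [DecidableEq V] (G : SimpleGraph V)

def Dp (F T : Finset V) (s : Finset (V × Bool)) : Prop :=
  (∀ x : V, (x, false) ∈ s → x ∈ F) ∧
  (∀ x : V, (x, true) ∈ s → x ∈ T) ∧
  (∀ x y : V, (x, false) ∈ s → (y, false) ∈ s → ¬ G.Adj x y) ∧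
  (∀ x : V, (x, false) ∈ s → (x, true) ∉ s)

lemma mem_image_true {B : Finset V} (x : V) (b : Bool) :
    (x, b) ∈ B.image (fun y => (y, true)) ↔ b = true ∧ x ∈ B := by
  simp only [Finset.mem_image, Prod.mk.injEq]
  constructor
  · rintro ⟨z, hz, rfl, rfl⟩; exact ⟨rfl, hz⟩
  · rintro ⟨rfl, hx⟩; exact ⟨x, hx, rfl, rfl⟩

lemma Dp_maximal_card {F T : Finset V} (hFT : F ⊆ T) (s : Finset (V × Bool))
    (hs : Dp G F T s) (hmax : ∀ s', Dp G F T s' → s ⊆ s' → s = s') :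
    s.card = T.card := by
  obtain ⟨h1, h2, h3, h4⟩ := hs
  set A : Finset V := (s.filter fun p => p.2 = false).image Prod.fst with hA
  have hAmem : ∀ x, x ∈ A ↔ (x, false) ∈ s := by
    intro x
    simp only [hA, Finset.mem_image, Finset.mem_filter]
    constructor
    · rintro ⟨⟨y, b⟩, ⟨hy, hb⟩, rfl⟩
      simp only at hb
      subst hb; exact hy
    · intro h; exact ⟨(x, false), ⟨h, rfl⟩, rfl⟩
  have hAF : A ⊆ F := fun x hx => h1 x ((hAmem x).1 hx)
  have hAT : A ⊆ T := hAF.trans hFT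
  have hext : s = s ∪ (T \ A).image (fun x => (x, true)) := by
    apply hmax
    · refine ⟨?_, ?_, ?_, ?_⟩
      · intro x hx
        rcases Finset.mem_union.1 hx with h | h
        · exact h1 x h
        · exact absurd ((mem_image_true x false).1 h).1 (by simp)
      · intro x hx
        rcases Finset.mem_union.1 hx with h | h
        · exact h2 x h
        · exact (Finset.mem_sdiff.1 ((mem_image_true x true).1 h).2).1
      · intro x y hx hy
        have hx' : (x, false) ∈ s := by
          rcases Finset.mem_union.1 hx with h | h
          · exact h
          · exact absurd ((mem_image_true x false).1 h).1 (by simp)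
        have hy' : (y, false) ∈ s := by
          rcases Finset.mem_union.1 hy with h | h
          · exact h
          · exact absurd ((mem_image_true y false).1 h).1 (by simp)
        exact h3 x y hx' hy'
      · intro x hx
        have hx' : (x, false) ∈ s := by
          rcases Finset.mem_union.1 hx with h | h
          · exact h
          · exact absurd ((mem_image_true x false).1 h).1 (by simp)
        intro hc
        rcases Finset.mem_union.1 hc with h | h
        · exact h4 x hx' h
        · exact (Finset.mem_sdiff.1 ((mem_image_true x true).1 h).2).2 ((hAmem x).2 hx')
    · exact Finset.subset_union_left
  have hBeq : (s.filter fun p => p.2 = true) = (T \ A).image (fun x => (x, true)) := by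
    ext ⟨y, b⟩
    simp only [Finset.mem_filter, mem_image_true]
    constructor
    · rintro ⟨hy, hb⟩
      subst hb
      refine ⟨rfl, Finset.mem_sdiff.2 ⟨h2 y hy, ?_⟩⟩
      intro hyA
      exact h4 y ((hAmem y).1 hyA) hy
    · rintro ⟨rfl, hz⟩
      refine ⟨?_, rfl⟩
      rw [hext]
      exact Finset.mem_union_right _ ((mem_image_true y true).2 ⟨rfl, hz⟩)
  have hsplit := Finset.card_filter_add_card_filter_not
    (s := s) (p := fun p : V × Bool => p.2 = false)
  have hneg : (s.filter fun p => ¬ p.2 = false) = s.filter (fun p => p.2 = true) := by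
    apply Finset.filter_congr
    intro p _
    cases h : p.2 <;> simp
  rw [hneg] at hsplit
  have hcardA : (s.filter fun p => p.2 = false).card = A.card := by
    rw [hA]
    rw [Finset.card_image_of_injOn]
    intro p hp q hq hpq
    have hp2 : p.2 = false := (Finset.mem_filter.1 hp).2
    have hq2 : q.2 = false := (Finset.mem_filter.1 hq).2
    exact Prod.ext hpq (hp2.trans hq2.symm)
  have hcardB : ((T \ A).image (fun x => (x, true))).card = T.card - A.card := by
    rw [Finset.card_image_of_injective _ (fun a b h => congrArg Prod.fst h),
      Finset.card_sdiff_of_subset hAT]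
  have hAle : A.card ≤ T.card := Finset.card_le_card hAT
  rw [hBeq, hcardA, hcardB] at hsplit
  omega

lemma Dp_pure {F T : Finset V} (hFT : F ⊆ T) : IsPureCpx (Dp G F T) := by
  intro s t hs ht hms hmt
  rw [Dp_maximal_card G hFT s hs hms, Dp_maximal_card G hFT t ht hmt]


lemma Dp_del_eq (F T : Finset V) (u : V) :
    (fun s => (u, false) ∉ s ∧ Dp G F T s) = Dp G (F.erase u) T := by
  funext s
  apply propext
  constructor
  · rintro ⟨hns, h1, h2, h3, h4⟩
    refine ⟨fun x hx => Finset.mem_erase.2 ⟨?_, h1 x hx⟩, h2, h3, h4⟩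
    rintro rfl; exact hns hx
  · rintro ⟨h1, h2, h3, h4⟩
    refine ⟨fun hc => ?_, fun x hx => Finset.mem_of_mem_erase (h1 x hx), h2, h3, h4⟩
    exact (Finset.mem_erase.1 (h1 u hc)).1 rfl

lemma Dp_link_eq (F T : Finset V) (u : V) (hu : u ∈ F) :
    (fun s => (u, false) ∉ s ∧ Dp G F T (insert (u, false) s)) =
      Dp G (F.filter fun x => ¬ G.Adj u x ∧ x ≠ u) (T.erase u) := by
  funext s
  apply propext
  constructor
  · rintro ⟨hns, h1, h2, h3, h4⟩
    refine ⟨?_, ?_, ?_, ?_⟩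
    · intro x hx
      refine Finset.mem_filter.2 ⟨h1 x (Finset.mem_insert_of_mem hx), ?_, ?_⟩
      · exact h3 u x (Finset.mem_insert_self _ _) (Finset.mem_insert_of_mem hx)
      · rintro rfl; exact hns hx
    · intro x hx
      refine Finset.mem_erase.2 ⟨?_, h2 x (Finset.mem_insert_of_mem hx)⟩
      rintro rfl
      exact h4 x (Finset.mem_insert_self _ _) (Finset.mem_insert_of_mem hx)
    · intro x y hx hy
      exact h3 x y (Finset.mem_insert_of_mem hx) (Finset.mem_insert_of_mem hy)
    · intro x hx hc
      exact h4 x (Finset.mem_insert_of_mem hx) (Finset.mem_insert_of_mem hc)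
  · rintro ⟨h1, h2, h3, h4⟩
    have hnotmem : (u, false) ∉ s := by
      intro hc
      exact (Finset.mem_filter.1 (h1 u hc)).2.2 rfl
    refine ⟨hnotmem, ?_, ?_, ?_, ?_⟩
    · intro x hx
      rcases Finset.mem_insert.1 hx with h | h
      · have : x = u := congrArg Prod.fst h
        subst this; exact hu
      · exact Finset.filter_subset _ _ (h1 x h)
    · intro x hx
      rcases Finset.mem_insert.1 hx with h | h
      · exact absurd (congrArg Prod.snd h) (by simp)
      · exact Finset.mem_of_mem_erase (h2 x h)
    · intro x y hx hy
      rcases Finset.mem_insert.1 hx with h | h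
      · have hxu : x = u := congrArg Prod.fst h
        subst hxu
        rcases Finset.mem_insert.1 hy with h' | h'
        · have : y = x := congrArg Prod.fst h'
          subst this; exact G.irrefl
        · exact fun hadj => (Finset.mem_filter.1 (h1 y h')).2.1 hadj
      · rcases Finset.mem_insert.1 hy with h' | h'
        · have : y = u := congrArg Prod.fst h'
          subst this
          exact fun hadj => (Finset.mem_filter.1 (h1 x h)).2.1 (G.adj_symm hadj)
        · exact h3 x y h h'
    · intro x hx hc
      have hcs : (x, true) ∈ s := by
        rcases Finset.mem_insert.1 hc with h | h
        · exact absurd (congrArg Prod.snd h) (by simp)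
        · exact h
      rcases Finset.mem_insert.1 hx with h | h
      · have : x = u := congrArg Prod.fst h
        subst this
        exact (Finset.mem_erase.1 (h2 x hcs)).1 rfl
      · exact h4 x h hcs

lemma Dp_simplex (T : Finset V) : VertexDecomposable (Dp G ∅ T) := by
  apply VertexDecomposable.simplex (T.image fun x => (x, true))
  intro s
  constructor
  · rintro ⟨h1, h2, h3, h4⟩
    intro p hp
    obtain ⟨x, b⟩ := p
    cases b
    · exact absurd (h1 x hp) (Finset.notMem_empty x)
    · exact Finset.mem_image.2 ⟨x, h2 x hp, rfl⟩
  · intro hsub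
    refine ⟨?_, ?_, ?_, ?_⟩
    · intro x hx
      obtain ⟨z, -, hz⟩ := Finset.mem_image.1 (hsub hx)
      exact absurd (congrArg Prod.snd hz) (by simp)
    · intro x hx
      obtain ⟨z, hzT, hz⟩ := Finset.mem_image.1 (hsub hx)
      have : z = x := congrArg Prod.fst hz
      subst this; exact hzT
    · intro x y hx _
      obtain ⟨z, -, hz⟩ := Finset.mem_image.1 (hsub hx)
      exact absurd (congrArg Prod.snd hz) (by simp)
    · intro x hx
      obtain ⟨z, -, hz⟩ := Finset.mem_image.1 (hsub hx)
      exact absurd (congrArg Prod.snd hz) (by simp)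

lemma Dp_vd : ∀ (N : ℕ) (F T : Finset V), F.card ≤ N → F ⊆ T →
    VertexDecomposable (Dp G F T) := by
  intro N
  induction N with
  | zero =>
    intro F T hcard _
    have : F = ∅ := Finset.card_eq_zero.1 (Nat.le_zero.1 hcard)
    subst this
    exact Dp_simplex G T
  | succ n ih =>
    intro F T hcard hFT
    rcases Finset.eq_empty_or_nonempty F with rfl | ⟨u, hu⟩
    · exact Dp_simplex G T
    · apply VertexDecomposable.shed ((u, false) : V × Bool)
      · refine ⟨?_, ?_, ?_, ?_⟩
        · intro x hx
          have : x = u := congrArg Prod.fst (Finset.mem_singleton.1 hx)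
          subst this; exact hu
        · intro x hx
          exact absurd (congrArg Prod.snd (Finset.mem_singleton.1 hx)) (by simp)
        · intro x y hx hy
          have hxu : x = u := congrArg Prod.fst (Finset.mem_singleton.1 hx)
          have hyu : y = u := congrArg Prod.fst (Finset.mem_singleton.1 hy)
          subst hxu; subst hyu; exact G.irrefl
        · intro x hx hc
          exact absurd (congrArg Prod.snd (Finset.mem_singleton.1 hc)) (by simp)
      · rw [Dp_link_eq G F T u hu]
        apply Dp_pure
        intro x hx
        have hx' := Finset.mem_filter.1 hx
        exact Finset.mem_erase.2 ⟨hx'.2.2, hFT hx'.1⟩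
      · rw [Dp_del_eq G F T u]
        exact Dp_pure G ((Finset.erase_subset u F).trans hFT)
      · rw [Dp_link_eq G F T u hu]
        apply ih
        · have h1 : (F.filter fun x => ¬ G.Adj u x ∧ x ≠ u).card ≤ (F.erase u).card := by
            apply Finset.card_le_card
            intro x hx
            have hx' := Finset.mem_filter.1 hx
            exact Finset.mem_erase.2 ⟨hx'.2.2, hx'.1⟩
          have h2 : (F.erase u).card < F.card := Finset.card_erase_lt_of_mem hu
          omega
        · intro x hx
          have hx' := Finset.mem_filter.1 hx
          exact Finset.mem_erase.2 ⟨hx'.2.2, hFT hx'.1⟩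
      · rw [Dp_del_eq G F T u]
        apply ih
        · have := Finset.card_erase_lt_of_mem hu
          omega
        · exact (Finset.erase_subset u F).trans hFT


def HG : SimpleGraph (V × Bool) where
  Adj p q := (p.2 = false ∧ q.2 = false ∧ G.Adj p.1 q.1) ∨ (p.1 = q.1 ∧ p.2 ≠ q.2)
  symm := by
    constructor
    rintro p q (⟨h1, h2, h3⟩ | ⟨h1, h2⟩)
    · exact Or.inl ⟨h2, h1, G.adj_symm h3⟩
    · exact Or.inr ⟨h1.symm, h2.symm⟩
  loopless := by
    constructor
    rintro p (⟨-, -, h⟩ | ⟨-, h⟩)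
    · exact G.irrefl h
    · exact h rfl

/-- The `false`-part of a face. -/
def As (s : Finset (V × Bool)) : Finset V := (s.filter fun p => p.2 = false).image Prod.fst
/-- The `true`-part of a face. -/
def Bs (s : Finset (V × Bool)) : Finset V := (s.filter fun p => p.2 = true).image Prod.fst
/-- Rebuild a face from its two parts. -/
def U (A B : Finset V) : Finset (V × Bool) :=
  A.image (fun x => (x, false)) ∪ B.image (fun x => (x, true))

lemma mem_As {s : Finset (V × Bool)} {x : V} : x ∈ As s ↔ (x, false) ∈ s := by
  simp only [As, Finset.mem_image, Finset.mem_filter]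
  constructor
  · rintro ⟨⟨y, b⟩, ⟨hy, hb⟩, rfl⟩
    simp only at hb; subst hb; exact hy
  · intro h; exact ⟨(x, false), ⟨h, rfl⟩, rfl⟩

lemma mem_Bs {s : Finset (V × Bool)} {x : V} : x ∈ Bs s ↔ (x, true) ∈ s := by
  simp only [Bs, Finset.mem_image, Finset.mem_filter]
  constructor
  · rintro ⟨⟨y, b⟩, ⟨hy, hb⟩, rfl⟩
    simp only at hb; subst hb; exact hy
  · intro h; exact ⟨(x, true), ⟨h, rfl⟩, rfl⟩

lemma mem_U {A B : Finset V} {x : V} {b : Bool} :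
    (x, b) ∈ U A B ↔ (b = false ∧ x ∈ A) ∨ (b = true ∧ x ∈ B) := by
  simp only [U, Finset.mem_union, Finset.mem_image, Prod.mk.injEq]
  constructor
  · rintro (⟨z, hz, rfl, rfl⟩ | ⟨z, hz, rfl, rfl⟩)
    · exact Or.inl ⟨rfl, hz⟩
    · exact Or.inr ⟨rfl, hz⟩
  · rintro (⟨rfl, hx⟩ | ⟨rfl, hx⟩)
    · exact Or.inl ⟨x, hx, rfl, rfl⟩
    · exact Or.inr ⟨x, hx, rfl, rfl⟩

lemma U_recon (s : Finset (V × Bool)) : U (As s) (Bs s) = s := by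
  ext ⟨x, b⟩
  rw [mem_U]
  cases b
  · simp [mem_As]
  · simp [mem_Bs]

lemma As_U (A B : Finset V) : As (U A B) = A := by
  ext x; rw [mem_As, mem_U]; simp

lemma Bs_U (A B : Finset V) : Bs (U A B) = B := by
  ext x; rw [mem_Bs, mem_U]; simp

lemma card_U (A B : Finset V) : (U A B).card = A.card + B.card := by
  rw [U, Finset.card_union_of_disjoint, Finset.card_image_of_injective _
      (fun a b h => congrArg Prod.fst h),
    Finset.card_image_of_injective _ (fun a b h => congrArg Prod.fst h)]
  rw [Finset.disjoint_left]
  rintro ⟨x, b⟩ h1 h2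
  obtain ⟨z, -, hz⟩ := Finset.mem_image.1 h1
  obtain ⟨w, -, hw⟩ := Finset.mem_image.1 h2
  have e1 : (false : Bool) = b := congrArg Prod.snd hz
  have e2 : (true : Bool) = b := congrArg Prod.snd hw
  rw [← e1] at e2
  simp at e2

lemma card_split (s : Finset (V × Bool)) : s.card = (As s).card + (Bs s).card := by
  conv_lhs => rw [← U_recon s]
  exact card_U _ _

lemma indep_HG_iff (s : Finset (V × Bool)) :
    IsIndep (HG G) s ↔ IsIndep G (As s) ∧ Disjoint (As s) (Bs s) := by
  constructor
  · intro hs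
    refine ⟨?_, ?_⟩
    · intro x hx y hy hadj
      exact hs _ (mem_As.1 hx) _ (mem_As.1 hy) (Or.inl ⟨rfl, rfl, hadj⟩)
    · rw [Finset.disjoint_left]
      intro x hx hx'
      exact hs _ (mem_As.1 hx) _ (mem_Bs.1 hx') (Or.inr ⟨rfl, by simp⟩)
  · rintro ⟨hind, hdisj⟩ ⟨x, bx⟩ hx ⟨y, by'⟩ hy hadj
    rcases hadj with ⟨e1, e2, hadj⟩ | ⟨e1, e2⟩
    · simp only at e1 e2
      subst e1; subst e2
      exact hind x (mem_As.2 hx) y (mem_As.2 hy) hadj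
    · simp only at e1 e2
      subst e1
      cases bx <;> cases by'
      · exact e2 rfl
      · exact Finset.disjoint_left.1 hdisj (mem_As.2 hx) (mem_Bs.2 hy)
      · exact Finset.disjoint_left.1 hdisj (mem_As.2 hy) (mem_Bs.2 hx)
      · exact e2 rfl

variable [Fintype V]

lemma count_pairs (j : ℕ) :
    (Finset.univ.filter fun s : Finset (V × Bool) => IsIndep (HG G) s ∧ s.card = j).card =
      (Finset.univ.filter fun p : Finset V × Finset V =>
        IsIndep G p.1 ∧ Disjoint p.1 p.2 ∧ p.1.card + p.2.card = j).card := by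
  refine Finset.card_bij' (fun s _ => (As s, Bs s)) (fun p _ => U p.1 p.2) ?_ ?_ ?_ ?_
  · intro s hs
    simp only [Finset.mem_filter, Finset.mem_univ, true_and] at hs ⊢
    obtain ⟨h1, h2⟩ := hs
    obtain ⟨ha, hb⟩ := (indep_HG_iff G s).1 h1
    exact ⟨ha, hb, by rw [← card_split]; exact h2⟩
  · intro p hp
    simp only [Finset.mem_filter, Finset.mem_univ, true_and] at hp ⊢
    obtain ⟨h1, h2, h3⟩ := hp
    constructor
    · rw [indep_HG_iff, As_U, Bs_U]
      exact ⟨h1, h2⟩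
    · rw [card_U]; exact h3
  · intro s _
    exact U_recon s
  · intro p _
    exact Prod.ext (As_U p.1 p.2) (Bs_U p.1 p.2)


lemma count_final (j : ℕ) (hj : j ≤ Fintype.card V) :
    (Finset.univ.filter fun s : Finset (V × Bool) => IsIndep (HG G) s ∧ s.card = j).card
      = ∑ i ∈ Finset.range (j + 1), (Fintype.card V - i).choose (j - i) *
          (Finset.univ.filter fun A : Finset V => IsIndep G A ∧ A.card = i).card := by
  rw [count_pairs G j]
  set n := Fintype.card V with hn
  set P := (Finset.univ.filter fun p : Finset V × Finset V =>
    IsIndep G p.1 ∧ Disjoint p.1 p.2 ∧ p.1.card + p.2.card = j) with hP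
  have hmap : ∀ p ∈ P, p.1 ∈ (Finset.univ.filter fun A => IsIndep G A) := by
    intro p hp
    simp only [hP, Finset.mem_filter, Finset.mem_univ, true_and] at hp ⊢
    exact hp.1
  rw [Finset.card_eq_sum_card_fiberwise hmap]
  have hfiber : ∀ A ∈ (Finset.univ.filter fun A => IsIndep G A),
      (P.filter fun p => p.1 = A).card
        = if A.card ≤ j then (n - A.card).choose (j - A.card) else 0 := by
    intro A hA
    have hAind : IsIndep G A := (Finset.mem_filter.1 hA).2
    have him : (P.filter fun p => p.1 = A)
        = (Finset.univ.filter fun B : Finset V =>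
            Disjoint A B ∧ A.card + B.card = j).image (fun B => (A, B)) := by
      ext ⟨A', B⟩
      simp only [hP, Finset.mem_filter, Finset.mem_univ, true_and, Finset.mem_image,
        Prod.mk.injEq]
      constructor
      · rintro ⟨⟨h1, h2, h3⟩, rfl⟩
        exact ⟨B, ⟨h2, h3⟩, rfl, rfl⟩
      · rintro ⟨B', ⟨hb1, hb2⟩, rfl, rfl⟩
        exact ⟨⟨hAind, hb1, hb2⟩, rfl⟩
    rw [him, Finset.card_image_of_injective _ (fun a b h => congrArg Prod.snd h)]
    by_cases hc : A.card ≤ j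
    · rw [if_pos hc]
      have heq : (Finset.univ.filter fun B : Finset V => Disjoint A B ∧ A.card + B.card = j)
          = Finset.powersetCard (j - A.card) (Finset.univ \ A) := by
        ext B
        simp only [Finset.mem_filter, Finset.mem_univ, true_and, Finset.mem_powersetCard,
          Finset.subset_sdiff, Finset.subset_univ, true_and]
        constructor
        · rintro ⟨h1, h2⟩
          exact ⟨h1.symm, by omega⟩
        · rintro ⟨h1, h2⟩
          exact ⟨h1.symm, by omega⟩
      rw [heq, Finset.card_powersetCard, Finset.card_sdiff_of_subset (Finset.subset_univ A),
        Finset.card_univ]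
    · rw [if_neg hc, Finset.card_eq_zero]
      rw [Finset.filter_eq_empty_iff]
      rintro B - ⟨-, h2⟩
      omega
  rw [Finset.sum_congr rfl hfiber]
  have hmap2 : ∀ A ∈ (Finset.univ.filter fun A => IsIndep G A),
      A.card ∈ Finset.range (n + 1) := by
    intro A _
    rw [Finset.mem_range]
    have h := Finset.card_le_univ A
    omega
  rw [← Finset.sum_fiberwise_of_maps_to hmap2
    (fun A : Finset V => if A.card ≤ j then (n - A.card).choose (j - A.card) else 0)]
  have hinner : ∀ i ∈ Finset.range (n + 1),
      (∑ A ∈ (Finset.univ.filter fun A => IsIndep G A).filter (fun A => A.card = i),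
        if A.card ≤ j then (n - A.card).choose (j - A.card) else 0)
      = (if i ≤ j then (n - i).choose (j - i) else 0) *
          (Finset.univ.filter fun A => IsIndep G A ∧ A.card = i).card := by
    intro i _
    rw [Finset.filter_filter]
    rw [Finset.sum_congr rfl (fun A hA => by
      rw [(Finset.mem_filter.1 hA).2.2])]
    rw [Finset.sum_const, smul_eq_mul, mul_comm]
  rw [Finset.sum_congr rfl hinner]
  rw [← Finset.sum_subset (Finset.range_subset_range.2 (by omega : j + 1 ≤ n + 1))]
  · apply Finset.sum_congr rfl
    intro i hi
    rw [if_pos (by rw [Finset.mem_range] at hi; omega)]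
  · intro i _ hi
    rw [Finset.mem_range] at hi
    rw [if_neg (by omega), zero_mul]


lemma HG_colorable (hG : G.Colorable 2) : (HG G).Colorable 2 := by
  obtain ⟨c⟩ := hG
  have key : ∀ x : Fin 2, x ≠ x + 1 := by decide
  refine ⟨SimpleGraph.Coloring.mk (fun p => if p.2 then c p.1 + 1 else c p.1) ?_⟩
  rintro ⟨x, bx⟩ ⟨y, by'⟩ hadj
  rcases hadj with ⟨h1, h2, h3⟩ | ⟨h1, h2⟩
  · simp only at h1 h2
    subst h1; subst h2
    simpa using c.valid h3
  · simp only at h1 h2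
    subst h1
    cases bx <;> cases by' <;> simp_all

lemma indep_iff_Dp [Fintype V] (s : Finset (V × Bool)) :
    IsIndep (HG G) s ↔ Dp G Finset.univ Finset.univ s := by
  rw [indep_HG_iff]
  constructor
  · rintro ⟨h1, h2⟩
    refine ⟨fun x _ => Finset.mem_univ x, fun x _ => Finset.mem_univ x, ?_, ?_⟩
    · intro x y hx hy
      exact h1 x (mem_As.2 hx) y (mem_As.2 hy)
    · intro x hx hc
      exact Finset.disjoint_left.1 h2 (mem_As.2 hx) (mem_Bs.2 hc)
  · rintro ⟨-, -, h3, h4⟩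
    refine ⟨fun x hx y hy => h3 x y (mem_As.1 hx) (mem_As.1 hy), ?_⟩
    rw [Finset.disjoint_left]
    intro x hx hc
    exact h4 x (mem_As.1 hx) (mem_Bs.1 hc)

end WhiskerAux

/-- The face vector of the independence complex of every bipartite graph is the `h`-vector
of the independence complex of a vertex-decomposable bipartite graph: for every bipartite
graph `G` on `n` vertices there is a bipartite graph `H` whose independence complex is pure
and vertex-decomposable, all of whose maximal independent sets have cardinality `n`, and
such that for `0 ≤ j ≤ n` the number of independent sets of cardinality `j` in `H` equals
`∑_{i=0}^{j} C(n-i, j-i) · f_{i-1}(G)`. -/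
theorem bipartite_f_is_vd_bipartite_h {V : Type} [Fintype V] [DecidableEq V]
    (G : SimpleGraph V) (hG : G.Colorable 2) :
    ∃ (W : Type) (_ : Fintype W) (_ : DecidableEq W) (H : SimpleGraph W),
      H.Colorable 2 ∧
      IsPureCpx (fun s : Finset W => IsIndep H s) ∧
      VertexDecomposable (fun s : Finset W => IsIndep H s) ∧
      (∀ s : Finset W, IsIndep H s →
        (∀ s', IsIndep H s' → s ⊆ s' → s = s') → s.card = Fintype.card V) ∧
      (∀ j ≤ Fintype.card V,
        indepCount H j =
          ∑ i ∈ Finset.range (j + 1),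
            (Fintype.card V - i).choose (j - i) * indepCount G i) := by
  classical
  refine ⟨V × Bool, inferInstance, inferInstance, WhiskerAux.HG G,
    WhiskerAux.HG_colorable G hG, ?_, ?_, ?_, ?_⟩
  · have key : (fun s : Finset (V × Bool) => IsIndep (WhiskerAux.HG G) s)
        = WhiskerAux.Dp G Finset.univ Finset.univ :=
      funext fun s => propext (WhiskerAux.indep_iff_Dp G s)
    rw [key]
    exact WhiskerAux.Dp_pure G (subset_refl _)
  · have key : (fun s : Finset (V × Bool) => IsIndep (WhiskerAux.HG G) s)
        = WhiskerAux.Dp G Finset.univ Finset.univ :=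
      funext fun s => propext (WhiskerAux.indep_iff_Dp G s)
    rw [key]
    exact WhiskerAux.Dp_vd G (Finset.univ : Finset V).card _ _ le_rfl (subset_refl _)
  · intro s hs hmax
    have h1 : WhiskerAux.Dp G Finset.univ Finset.univ s :=
      (WhiskerAux.indep_iff_Dp G s).1 hs
    have hmax' : ∀ s', WhiskerAux.Dp G Finset.univ Finset.univ s' → s ⊆ s' → s = s' :=
      fun s' h hsub => hmax s' ((WhiskerAux.indep_iff_Dp G s').2 h) hsub
    have := WhiskerAux.Dp_maximal_card G (subset_refl _) s h1 hmax'
    rwa [Finset.card_univ] at this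
  · intro j hj
    rw [WhiskerAux.indepCount_eq_card, WhiskerAux.count_final G j hj]
    apply Finset.sum_congr rfl
    intro i _
    rw [WhiskerAux.indepCount_eq_card]
end
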